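/- arXiv:2401.02181 — 2 statements merged into one kernel-verified Lean document; each statement's English description precedes it below -/
import Mathlib

section
/- Let D ⊆ ℝ² be a bounded convex open set, let θ ∈ (0, 1], and let ρ : ℝ² → ℝ be a measurable weight with 0 ≤ ρ ≤ 1 on D and ∫_D ρ dx ≥ θ·|D|, where |D| is the Lebesgue measure of D. Then for every continuously differentiable function w : ℝ² → ℝ, ∫_D |w − e_ρ(w)| dx ≤ (2/θ)·diam(D)·∫_D |∇w| dx, where e_ρ(w) = (∫_D w·ρ dx)/(∫_D ρ dx). -/
open MeasureTheory ENNReal Set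

local notation "E2" => EuclideanSpace ℝ (Fin 2)

-- change of variables: affine substitution for lintegrals on ℝ²
lemma wp_aux_cov (H : E2 → ℝ≥0∞) (hH : Measurable H) (a : E2) {r : ℝ} (hr : r ≠ 0) :
    ∫⁻ x, H (a + r • x) = ENNReal.ofReal ((r ^ 2)⁻¹) * ∫⁻ x, H x := by
  have hsm : Measurable fun x : E2 => r • x := (continuous_const_smul r).measurable
  have had : Measurable fun x : E2 => a + x := (continuous_const.add continuous_id).measurable
  have h1 : ∫⁻ x, H x ∂(volume.map ((fun x : E2 => a + x) ∘ fun x => r • x))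
      = ∫⁻ x, H (a + r • x) := lintegral_map hH (had.comp hsm)
  rw [← h1, ← Measure.map_map had hsm, Measure.map_addHaar_smul volume hr,
    Measure.map_smul, map_add_left_eq_self volume a, lintegral_smul_measure,
    finrank_euclideanSpace, Fintype.card_fin, abs_of_nonneg (by positivity : (0:ℝ) ≤ (r ^ 2)⁻¹), smul_eq_mul]

-- key scaling step on a convex set
lemma wp_key_step {D : Set E2} (hDm : MeasurableSet D) (hDc : Convex ℝ D)
    (G : E2 → ℝ≥0∞) (hG : Measurable G) {z : E2} (hz : z ∈ D) {s : ℝ}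
    (hs : s ∈ Set.Ioc (0:ℝ) 1) :
    ∫⁻ x in D, G ((1 - s) • z + s • x) ≤ ENNReal.ofReal ((s ^ 2)⁻¹) * ∫⁻ x in D, G x := by
  have h0 : ∫⁻ x in D, G ((1 - s) • z + s • x)
      = ∫⁻ x, D.indicator (fun x => G ((1 - s) • z + s • x)) x := by
    rw [lintegral_indicator hDm _]
  have hmono : ∀ x, D.indicator (fun x => G ((1 - s) • z + s • x)) x
      ≤ (D.indicator G) ((1 - s) • z + s • x) := by
    intro x
    by_cases hx : x ∈ D
    · have hmem : (1 - s) • z + s • x ∈ D :=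
        hDc hz hx (by linarith [hs.2]) (le_of_lt hs.1) (by ring)
      rw [Set.indicator_of_mem hx, Set.indicator_of_mem hmem]
    · rw [Set.indicator_of_notMem hx]; exact zero_le
  calc ∫⁻ x in D, G ((1 - s) • z + s • x)
      ≤ ∫⁻ x, (D.indicator G) ((1 - s) • z + s • x) := by
        rw [h0]; exact lintegral_mono hmono
    _ = ENNReal.ofReal ((s ^ 2)⁻¹) * ∫⁻ x, D.indicator G x :=
        wp_aux_cov (D.indicator G) (hG.indicator hDm) _ (ne_of_gt hs.1)
    _ = ENNReal.ofReal ((s ^ 2)⁻¹) * ∫⁻ x in D, G x := by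
        rw [lintegral_indicator hDm _]

-- per-t bound on the double integral
lemma wp_per_t {D : Set E2} (hDm : MeasurableSet D) (hDc : Convex ℝ D)
    (G : E2 → ℝ≥0∞) (hG : Measurable G) {t : ℝ} (ht : t ∈ Set.Ioc (0:ℝ) 1) :
    ∫⁻ x in D, ∫⁻ y in D, G ((1 - t) • y + t • x)
      ≤ ENNReal.ofReal (((max t (1 - t)) ^ 2)⁻¹) * (volume D * ∫⁻ z in D, G z) := by
  rcases le_or_gt t (1/2) with hth | hth
  · -- substitute in y, scale s = 1 - t ∈ [1/2, 1)
    have hs : (1 - t) ∈ Set.Ioc (0:ℝ) 1 := ⟨by linarith, by linarith [ht.1]⟩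
    have hmax : max t (1 - t) = 1 - t := max_eq_right (by linarith)
    calc ∫⁻ x in D, ∫⁻ y in D, G ((1 - t) • y + t • x)
        = ∫⁻ x in D, ∫⁻ y in D, G ((1 - (1 - t)) • x + (1 - t) • y) := by
          refine lintegral_congr fun x => lintegral_congr fun y => ?_
          congr 1
          module
      _ ≤ ∫⁻ _ in D, ENNReal.ofReal (((1 - t) ^ 2)⁻¹) * ∫⁻ z in D, G z := by
          refine setLIntegral_mono' hDm fun x hx => ?_
          exact wp_key_step hDm hDc G hG hx hs
      _ = ENNReal.ofReal (((max t (1 - t)) ^ 2)⁻¹) * (volume D * ∫⁻ z in D, G z) := by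
          rw [setLIntegral_const, hmax]; ring
  · -- substitute in x, scale s = t ∈ (1/2, 1]
    have hmax : max t (1 - t) = t := max_eq_left (by linarith)
    have hswap : ∫⁻ x in D, ∫⁻ y in D, G ((1 - t) • y + t • x)
        = ∫⁻ y in D, ∫⁻ x in D, G ((1 - t) • y + t • x) := by
      apply lintegral_lintegral_swap
      have hcont : Measurable fun p : E2 × E2 => G ((1 - t) • p.2 + t • p.1) :=
        hG.comp (((continuous_const_smul (1-t)).comp continuous_snd).add
          ((continuous_const_smul t).comp continuous_fst)).measurable
      exact hcont.aemeasurable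
    rw [hswap]
    calc ∫⁻ y in D, ∫⁻ x in D, G ((1 - t) • y + t • x)
        ≤ ∫⁻ _ in D, ENNReal.ofReal ((t ^ 2)⁻¹) * ∫⁻ z in D, G z := by
          refine setLIntegral_mono' hDm fun y hy => ?_
          exact wp_key_step hDm hDc G hG hy ht
      _ = ENNReal.ofReal (((max t (1 - t)) ^ 2)⁻¹) * (volume D * ∫⁻ z in D, G z) := by
          rw [setLIntegral_const, hmax]; ring

lemma wp_m_cont : Continuous fun t : ℝ => (((max t (1 - t)) ^ 2)⁻¹) := by
  have h1 : Continuous fun t : ℝ => max t (1 - t) :=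
    continuous_id.max (continuous_const.sub continuous_id)
  refine (h1.pow 2).inv₀ fun t => ?_
  have : (1:ℝ)/2 ≤ max t (1 - t) := by
    rcases le_total t (1 - t) with h | h
    · rw [max_eq_right h]; linarith [le_max_right t (1 - t)]
    · rw [max_eq_left h]; linarith
  exact pow_ne_zero 2 (ne_of_gt (by linarith))

lemma wp_m_integral : ∫ t in Set.Ioc (0:ℝ) 1, ((max t (1 - t)) ^ 2)⁻¹ = 2 := by
  rw [← intervalIntegral.integral_of_le (by norm_num : (0:ℝ) ≤ 1)]
  have hsplit : ∫ t in (0:ℝ)..1, ((max t (1 - t)) ^ 2)⁻¹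
      = (∫ t in (0:ℝ)..(1/2), ((max t (1 - t)) ^ 2)⁻¹)
        + ∫ t in (1/2:ℝ)..1, ((max t (1 - t)) ^ 2)⁻¹ := by
    rw [intervalIntegral.integral_add_adjacent_intervals] <;>
      exact (wp_m_cont.intervalIntegrable _ _)
  rw [hsplit]
  have h1 : ∫ t in (0:ℝ)..(1/2), ((max t (1 - t)) ^ 2)⁻¹
      = ∫ t in (0:ℝ)..(1/2), (((1:ℝ) - t) ^ 2)⁻¹ := by
    refine intervalIntegral.integral_congr fun t ht => ?_
    rw [Set.uIcc_of_le (by norm_num : (0:ℝ) ≤ 1/2)] at ht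
    rw [max_eq_right (by cases ht; linarith)]
  have h2 : ∫ t in (1/2:ℝ)..1, ((max t (1 - t)) ^ 2)⁻¹
      = ∫ t in (1/2:ℝ)..1, (t ^ 2)⁻¹ := by
    refine intervalIntegral.integral_congr fun t ht => ?_
    rw [Set.uIcc_of_le (by norm_num : (1/2:ℝ) ≤ 1)] at ht
    rw [max_eq_left (by cases ht; linarith)]
  have hv1 : ∫ t in (0:ℝ)..(1/2), (((1:ℝ) - t) ^ 2)⁻¹ = 1 := by
    have hft : ∀ t ∈ Set.uIcc (0:ℝ) (1/2), HasDerivAt (fun s : ℝ => (1 - s)⁻¹)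
        ((((1:ℝ) - t) ^ 2)⁻¹) t := by
      intro t ht
      rw [Set.uIcc_of_le (by norm_num : (0:ℝ) ≤ 1/2)] at ht
      have hne : (1:ℝ) - t ≠ 0 := by cases ht; intro h; linarith
      have h : HasDerivAt (fun s : ℝ => (1 - s)⁻¹) _ t := ((hasDerivAt_id t).const_sub 1).inv hne
      convert h using 1
      simp only [id_eq]; ring
    have := intervalIntegral.integral_eq_sub_of_hasDerivAt hft ?_
    · rw [this]; norm_num
    · apply ContinuousOn.intervalIntegrable
      refine ((continuous_const.sub continuous_id).pow 2).continuousOn.inv₀ fun t ht => ?_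
      rw [Set.uIcc_of_le (by norm_num : (0:ℝ) ≤ 1/2)] at ht
      have : (1:ℝ) - t ≠ 0 := by cases ht; intro h; linarith
      exact pow_ne_zero 2 this
  have hv2 : ∫ t in (1/2:ℝ)..1, ((t:ℝ) ^ 2)⁻¹ = 1 := by
    have hft : ∀ t ∈ Set.uIcc (1/2:ℝ) 1, HasDerivAt (fun s : ℝ => -s⁻¹)
        (((t:ℝ) ^ 2)⁻¹) t := by
      intro t ht
      rw [Set.uIcc_of_le (by norm_num : (1/2:ℝ) ≤ 1)] at ht
      have hne : t ≠ 0 := by cases ht; intro h; linarith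
      have h : HasDerivAt (fun s : ℝ => -s⁻¹) _ t := ((hasDerivAt_id t).inv hne).neg
      convert h using 1
      simp only [id_eq]; ring
    have := intervalIntegral.integral_eq_sub_of_hasDerivAt hft ?_
    · rw [this]; norm_num
    · apply ContinuousOn.intervalIntegrable
      refine (continuous_pow 2).continuousOn.inv₀ fun t ht => ?_
      rw [Set.uIcc_of_le (by norm_num : (1/2:ℝ) ≤ 1)] at ht
      have : t ≠ 0 := by cases ht; intro h; linarith
      positivity
  rw [h1, h2, hv1, hv2]; norm_num

lemma wp_ftc {D : Set E2} (hDb : Bornology.IsBounded D)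
    {w : E2 → ℝ} (hw : ContDiff ℝ 1 w) {x y : E2} (hx : x ∈ D) (hy : y ∈ D) :
    |w x - w y| ≤ Metric.diam D * ∫ t in Set.Ioc (0:ℝ) 1,
      ‖fderiv ℝ w ((1 - t) • y + t • x)‖ := by
  set c : ℝ → E2 := fun t => y + t • (x - y) with hc
  have hceq : ∀ t : ℝ, (1 - t) • y + t • x = c t := by
    intro t; simp only [hc]; module
  have hccont : Continuous c := continuous_const.add (continuous_id.smul continuous_const)
  have hgcont : Continuous fun t => fderiv ℝ w (c t) :=
    (hw.continuous_fderiv one_ne_zero).comp hccont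
  have hd : ∀ t : ℝ, HasDerivAt (fun s => w (c s)) ((fderiv ℝ w (c t)) (x - y)) t := by
    intro t
    have hct : HasDerivAt c (x - y) t := by
      simpa [hc] using ((hasDerivAt_id t).smul_const (x - y)).const_add y
    exact ((hw.differentiable one_ne_zero _).hasFDerivAt).comp_hasDerivAt t hct
  have hint : IntervalIntegrable (fun t => (fderiv ℝ w (c t)) (x - y)) volume 0 1 :=
    (hgcont.clm_apply continuous_const).intervalIntegrable _ _
  have heq : w x - w y = ∫ t in (0:ℝ)..1, (fderiv ℝ w (c t)) (x - y) := by
    have := intervalIntegral.integral_eq_sub_of_hasDerivAt (fun t _ => hd t) hint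
    rw [this]
    simp [hc]
  have hxy : ‖x - y‖ ≤ Metric.diam D := by
    rw [← dist_eq_norm]; exact Metric.dist_le_diam_of_mem hDb hx hy
  have hbound : |w x - w y| ≤ ∫ t in (0:ℝ)..1, Metric.diam D * ‖fderiv ℝ w (c t)‖ := by
    rw [heq]
    calc |∫ t in (0:ℝ)..1, (fderiv ℝ w (c t)) (x - y)|
        ≤ ∫ t in (0:ℝ)..1, ‖(fderiv ℝ w (c t)) (x - y)‖ := by
          simpa using intervalIntegral.norm_integral_le_integral_norm
            (f := fun t => (fderiv ℝ w (c t)) (x - y)) (by norm_num : (0:ℝ) ≤ 1)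
      _ ≤ ∫ t in (0:ℝ)..1, Metric.diam D * ‖fderiv ℝ w (c t)‖ := by
          apply intervalIntegral.integral_mono_on (by norm_num : (0:ℝ) ≤ 1)
          · exact hint.norm
          · exact (continuous_const.mul hgcont.norm).intervalIntegrable _ _
          · intro t _
            calc ‖(fderiv ℝ w (c t)) (x - y)‖ ≤ ‖fderiv ℝ w (c t)‖ * ‖x - y‖ :=
                  (fderiv ℝ w (c t)).le_opNorm _
              _ ≤ Metric.diam D * ‖fderiv ℝ w (c t)‖ := by
                  rw [mul_comm]
                  exact mul_le_mul_of_nonneg_right hxy (norm_nonneg _)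
  calc |w x - w y| ≤ ∫ t in (0:ℝ)..1, Metric.diam D * ‖fderiv ℝ w (c t)‖ := hbound
    _ = Metric.diam D * ∫ t in (0:ℝ)..1, ‖fderiv ℝ w (c t)‖ := by
        rw [intervalIntegral.integral_const_mul]
    _ = Metric.diam D * ∫ t in Set.Ioc (0:ℝ) 1, ‖fderiv ℝ w ((1 - t) • y + t • x)‖ := by
        rw [intervalIntegral.integral_of_le (by norm_num : (0:ℝ) ≤ 1)]
        congr 1
        refine setIntegral_congr_fun measurableSet_Ioc fun t _ => ?_
        rw [hceq]

lemma wp_ftc_ennreal {D : Set E2} (hDb : Bornology.IsBounded D)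
    {w : E2 → ℝ} (hw : ContDiff ℝ 1 w) {x y : E2} (hx : x ∈ D) (hy : y ∈ D) :
    ENNReal.ofReal |w x - w y| ≤ ENNReal.ofReal (Metric.diam D) *
      ∫⁻ t in Set.Ioc (0:ℝ) 1, ENNReal.ofReal ‖fderiv ℝ w ((1 - t) • y + t • x)‖ := by
  have hcont : Continuous fun t : ℝ => ‖fderiv ℝ w ((1 - t) • y + t • x)‖ := by
    apply Continuous.norm
    exact (hw.continuous_fderiv one_ne_zero).comp
      (((continuous_const.sub continuous_id).smul continuous_const).add
        (continuous_id.smul continuous_const))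
  have hInt : IntegrableOn (fun t : ℝ => ‖fderiv ℝ w ((1 - t) • y + t • x)‖)
      (Set.Ioc (0:ℝ) 1) volume := hcont.integrableOn_Ioc
  calc ENNReal.ofReal |w x - w y|
      ≤ ENNReal.ofReal (Metric.diam D * ∫ t in Set.Ioc (0:ℝ) 1,
          ‖fderiv ℝ w ((1 - t) • y + t • x)‖) :=
        ENNReal.ofReal_le_ofReal (wp_ftc hDb hw hx hy)
    _ = ENNReal.ofReal (Metric.diam D) * ENNReal.ofReal (∫ t in Set.Ioc (0:ℝ) 1,
          ‖fderiv ℝ w ((1 - t) • y + t • x)‖) :=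
        ENNReal.ofReal_mul Metric.diam_nonneg
    _ = ENNReal.ofReal (Metric.diam D) *
          ∫⁻ t in Set.Ioc (0:ℝ) 1, ENNReal.ofReal ‖fderiv ℝ w ((1 - t) • y + t • x)‖ := by
        rw [ofReal_integral_eq_lintegral_ofReal hInt
          (Filter.Eventually.of_forall fun t => norm_nonneg _)]

lemma wp_core {D : Set E2} (hDm : MeasurableSet D) (hDc : Convex ℝ D)
    (hDb : Bornology.IsBounded D) {w : E2 → ℝ} (hw : ContDiff ℝ 1 w) :
    ∫⁻ x in D, ∫⁻ y in D, ENNReal.ofReal |w x - w y|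
      ≤ ENNReal.ofReal (Metric.diam D) * (ENNReal.ofReal 2 *
          (volume D * ∫⁻ z in D, ENNReal.ofReal ‖fderiv ℝ w z‖)) := by
  set G : E2 → ℝ≥0∞ := fun z => ENNReal.ofReal ‖fderiv ℝ w z‖ with hGdef
  have hG : Measurable G :=
    (ENNReal.continuous_ofReal.comp (hw.continuous_fderiv one_ne_zero).norm).measurable
  have hGaff : ∀ x : E2, Measurable fun p : E2 × ℝ => G ((1 - p.2) • p.1 + p.2 • x) := by
    intro x
    apply hG.comp
    exact (((continuous_const.sub continuous_snd).smul continuous_fst).add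
      (continuous_snd.smul continuous_const)).measurable
  have step1 : ∫⁻ x in D, ∫⁻ y in D, ENNReal.ofReal |w x - w y|
      ≤ ∫⁻ x in D, ∫⁻ y in D, ENNReal.ofReal (Metric.diam D) *
          ∫⁻ t in Set.Ioc (0:ℝ) 1, G ((1 - t) • y + t • x) := by
    refine setLIntegral_mono' hDm fun x hx => ?_
    refine setLIntegral_mono' hDm fun y hy => ?_
    exact wp_ftc_ennreal hDb hw hx hy
  have step2 : ∫⁻ x in D, ∫⁻ y in D, ENNReal.ofReal (Metric.diam D) *
          ∫⁻ t in Set.Ioc (0:ℝ) 1, G ((1 - t) • y + t • x)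
      = ENNReal.ofReal (Metric.diam D) *
          ∫⁻ x in D, ∫⁻ y in D, ∫⁻ t in Set.Ioc (0:ℝ) 1, G ((1 - t) • y + t • x) := by
    rw [← lintegral_const_mul' _ _ ENNReal.ofReal_ne_top]
    refine lintegral_congr fun x => ?_
    rw [← lintegral_const_mul' _ _ ENNReal.ofReal_ne_top]
  have step3 : ∫⁻ x in D, ∫⁻ y in D, ∫⁻ t in Set.Ioc (0:ℝ) 1, G ((1 - t) • y + t • x)
      = ∫⁻ t in Set.Ioc (0:ℝ) 1, ∫⁻ x in D, ∫⁻ y in D, G ((1 - t) • y + t • x) := by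
    have hswap1 : ∀ x : E2, ∫⁻ y in D, ∫⁻ t in Set.Ioc (0:ℝ) 1, G ((1 - t) • y + t • x)
        = ∫⁻ t in Set.Ioc (0:ℝ) 1, ∫⁻ y in D, G ((1 - t) • y + t • x) := by
      intro x
      exact lintegral_lintegral_swap (hGaff x).aemeasurable
    simp only [hswap1]
    apply lintegral_lintegral_swap
    have : Measurable fun p : E2 × ℝ => ∫⁻ y in D, G ((1 - p.2) • y + p.2 • p.1) := by
      apply Measurable.lintegral_prod_right' (f := fun q : (E2 × ℝ) × E2 =>
        G ((1 - q.1.2) • q.2 + q.1.2 • q.1.1))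
      apply hG.comp
      exact (((continuous_const.sub (continuous_snd.comp continuous_fst)).smul
        continuous_snd).add ((continuous_snd.comp continuous_fst).smul
          (continuous_fst.comp continuous_fst))).measurable
    exact this.aemeasurable
  have step5 : ∫⁻ t in Set.Ioc (0:ℝ) 1, ∫⁻ x in D, ∫⁻ y in D, G ((1 - t) • y + t • x)
      ≤ ∫⁻ t in Set.Ioc (0:ℝ) 1, ENNReal.ofReal (((max t (1 - t)) ^ 2)⁻¹) *
          (volume D * ∫⁻ z in D, G z) := by
    refine setLIntegral_mono' measurableSet_Ioc fun t ht => ?_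
    exact wp_per_t hDm hDc G hG ht
  have step6 : ∫⁻ t in Set.Ioc (0:ℝ) 1, ENNReal.ofReal (((max t (1 - t)) ^ 2)⁻¹) *
          (volume D * ∫⁻ z in D, G z)
      = ENNReal.ofReal 2 * (volume D * ∫⁻ z in D, G z) := by
    have hm : Measurable fun t : ℝ => ENNReal.ofReal (((max t (1 - t)) ^ 2)⁻¹) :=
      ENNReal.measurable_ofReal.comp wp_m_cont.measurable
    rw [lintegral_mul_const'' _ hm.aemeasurable]
    congr 1
    rw [← ofReal_integral_eq_lintegral_ofReal (wp_m_cont.integrableOn_Ioc)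
      (Filter.Eventually.of_forall fun t => by positivity), wp_m_integral]
  calc ∫⁻ x in D, ∫⁻ y in D, ENNReal.ofReal |w x - w y|
      ≤ ENNReal.ofReal (Metric.diam D) *
          ∫⁻ x in D, ∫⁻ y in D, ∫⁻ t in Set.Ioc (0:ℝ) 1, G ((1 - t) • y + t • x) := by
        rw [← step2]; exact step1
    _ = ENNReal.ofReal (Metric.diam D) *
          ∫⁻ t in Set.Ioc (0:ℝ) 1, ∫⁻ x in D, ∫⁻ y in D, G ((1 - t) • y + t • x) := by
        rw [step3]
    _ ≤ ENNReal.ofReal (Metric.diam D) * (ENNReal.ofReal 2 * (volume D * ∫⁻ z in D, G z)) := by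
        refine mul_le_mul_right ?_ _
        rw [← step6]; exact step5

/-- Weighted `L¹` Poincaré-type inequality on a bounded convex open set `D ⊆ ℝ²`:
if `0 ≤ ρ ≤ 1` on `D` and `∫_D ρ ≥ θ·|D|`, then for every `C¹` function `w`,
`∫_D |w - e_ρ(w)| ≤ (2/θ)·diam(D)·∫_D |∇w|`, where
`e_ρ(w) = (∫_D w·ρ)/(∫_D ρ)`. -/
theorem weighted_poincare_L1
    (D : Set (EuclideanSpace ℝ (Fin 2)))
    (hDo : IsOpen D) (hDb : Bornology.IsBounded D) (hDc : Convex ℝ D)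
    (θ : ℝ) (hθ : θ ∈ Set.Ioc (0 : ℝ) 1)
    (ρ : EuclideanSpace ℝ (Fin 2) → ℝ) (hρm : Measurable ρ)
    (hρ0 : ∀ x ∈ D, 0 ≤ ρ x) (hρ1 : ∀ x ∈ D, ρ x ≤ 1)
    (hρθ : θ * (volume D).toReal ≤ ∫ x in D, ρ x) :
    ∀ w : EuclideanSpace ℝ (Fin 2) → ℝ, ContDiff ℝ 1 w →
      (∫ x in D, |w x - (∫ y in D, w y * ρ y) / ∫ y in D, ρ y|) ≤
        (2 / θ) * Metric.diam D * ∫ x in D, ‖fderiv ℝ w x‖ := by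
  intro w hw
  have hDm : MeasurableSet D := hDo.measurableSet
  by_cases hvol : volume D = 0
  · rw [Measure.restrict_eq_zero.mpr hvol]
    simp
  -- nondegenerate case
  have hfin : volume D ≠ ⊤ := hDb.measure_lt_top.ne
  set V : ℝ := (volume D).toReal with hVdef
  have hV : 0 < V := ENNReal.toReal_pos hvol hfin
  set I : ℝ := ∫ y in D, ρ y with hIdef
  set J : ℝ := ∫ y in D, w y * ρ y with hJdef
  have hθV : 0 < θ * V := mul_pos hθ.1 hV
  have hI : 0 < I := lt_of_lt_of_le hθV hρθ
  -- bound for w on the closure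
  have hK : IsCompact (closure D) := hDb.isCompact_closure
  obtain ⟨C, hC⟩ := hK.exists_bound_of_continuousOn hw.continuous.continuousOn
  have hC0 : 0 ≤ C := by
    rcases Set.eq_empty_or_nonempty D with hD | ⟨z, hz⟩
    · exfalso; apply hvol; rw [hD]; simp
    · exact le_trans (norm_nonneg _) (hC z (subset_closure hz))
  obtain ⟨Cg, hCg⟩ := hK.exists_bound_of_continuousOn
    (hw.continuous_fderiv one_ne_zero).continuousOn
  -- integrability facts
  have hbρ : ∀ᵐ y ∂(volume.restrict D), ‖ρ y‖ ≤ 1 := by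
    refine (ae_restrict_iff' hDm).2 (Filter.Eventually.of_forall fun y hy => ?_)
    rw [Real.norm_eq_abs, abs_of_nonneg (hρ0 y hy)]; exact hρ1 y hy
  have hIρ : IntegrableOn ρ D := Measure.integrableOn_of_bounded hfin
    hρm.aestronglyMeasurable hbρ
  have hIwρ : IntegrableOn (fun y => w y * ρ y) D := by
    refine Measure.integrableOn_of_bounded (M := C) hfin
      ((hw.continuous.measurable.mul hρm).aestronglyMeasurable) ?_
    refine (ae_restrict_iff' hDm).2 (Filter.Eventually.of_forall fun y hy => ?_)
    rw [Real.norm_eq_abs, abs_mul]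
    calc |w y| * |ρ y| ≤ C * 1 := by
          refine mul_le_mul ?_ ?_ (abs_nonneg _) hC0
          · exact hC y (subset_closure hy)
          · rw [abs_of_nonneg (hρ0 y hy)]; exact hρ1 y hy
      _ = C := mul_one C
  have hIg : IntegrableOn (fun z => ‖fderiv ℝ w z‖) D := by
    refine Measure.integrableOn_of_bounded (M := Cg) hfin
      ((hw.continuous_fderiv one_ne_zero).norm.aestronglyMeasurable) ?_
    refine (ae_restrict_iff' hDm).2 (Filter.Eventually.of_forall fun z hz => ?_)
    rw [norm_norm]; exact hCg z (subset_closure hz)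
  set R : ℝ := ∫ z in D, ‖fderiv ℝ w z‖ with hRdef
  have hR0 : 0 ≤ R := integral_nonneg fun z => norm_nonneg _
  -- the iterated lintegral and its finiteness
  set ℓ : EuclideanSpace ℝ (Fin 2) → ℝ≥0∞ :=
    fun x => ∫⁻ y in D, ENNReal.ofReal |w x - w y| with hℓdef
  have hℓ_ne : ∀ x ∈ D, ℓ x ≠ ⊤ := by
    intro x hx
    refine ne_top_of_le_ne_top
      (ENNReal.mul_ne_top (ENNReal.ofReal_ne_top (r := 2 * C)) hfin) ?_
    rw [hℓdef, ← setLIntegral_const D (ENNReal.ofReal (2 * C))]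
    refine setLIntegral_mono' hDm fun y hy => ENNReal.ofReal_le_ofReal ?_
    calc |w x - w y| ≤ |w x| + |w y| := abs_sub _ _
      _ ≤ C + C := add_le_add (hC x (subset_closure hx)) (hC y (subset_closure hy))
      _ = 2 * C := by ring
  have hFℓ : ∀ x, (∫ y in D, |w x - w y|) = (ℓ x).toReal := by
    intro x
    rw [hℓdef]
    exact integral_eq_lintegral_of_nonneg_ae
      (Filter.Eventually.of_forall fun y => abs_nonneg _)
      (Continuous.aestronglyMeasurable ((continuous_const.sub hw.continuous).abs))
  -- pointwise bound
  have hpt : ∀ x ∈ D, |w x - J / I| ≤ I⁻¹ * ∫ y in D, |w x - w y| := by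
    intro x hx
    have hIabs : IntegrableOn (fun y => |w x - w y|) D := by
      refine Measure.integrableOn_of_bounded (M := C + C) hfin
        (Continuous.aestronglyMeasurable ((continuous_const.sub hw.continuous).abs)) ?_
      refine (ae_restrict_iff' hDm).2 (Filter.Eventually.of_forall fun y hy => ?_)
      rw [Real.norm_eq_abs, abs_abs]
      calc |w x - w y| ≤ |w x| + |w y| := abs_sub _ _
        _ ≤ C + C := add_le_add (hC x (subset_closure hx)) (hC y (subset_closure hy))
    have hsub : IntegrableOn (fun y => (w x - w y) * ρ y) D := by
      have : (fun y => (w x - w y) * ρ y) = fun y => w x * ρ y - w y * ρ y := by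
        funext y; ring
      rw [this]
      exact (hIρ.const_mul (w x)).sub hIwρ
    have hkey : w x * I - J = ∫ y in D, (w x - w y) * ρ y := by
      have : ∀ y, (w x - w y) * ρ y = w x * ρ y - w y * ρ y := fun y => by ring
      simp only [this]
      rw [integral_sub (hIρ.const_mul (w x)) hIwρ, integral_const_mul]
    have habs0 : |∫ y in D, (w x - w y) * ρ y| ≤ ∫ y in D, |w x - w y| * |ρ y| := by
      simpa [Real.norm_eq_abs] using
        norm_integral_le_integral_norm (μ := volume.restrict D)
          (fun y => (w x - w y) * ρ y)
    have hsub' : IntegrableOn (fun y => |w x - w y| * |ρ y|) D := by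
      simpa [abs_mul, IntegrableOn] using hsub.abs
    have habs : |∫ y in D, (w x - w y) * ρ y| ≤ ∫ y in D, |w x - w y| := by
      calc |∫ y in D, (w x - w y) * ρ y| ≤ ∫ y in D, |w x - w y| * |ρ y| := habs0
        _ ≤ ∫ y in D, |w x - w y| := by
            refine integral_mono_ae hsub' hIabs ?_
            refine (ae_restrict_iff' hDm).2 (Filter.Eventually.of_forall fun y hy => ?_)
            dsimp only
            calc |w x - w y| * |ρ y| ≤ |w x - w y| * 1 := by
                  refine mul_le_mul_of_nonneg_left ?_ (abs_nonneg _)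
                  rw [abs_of_nonneg (hρ0 y hy)]; exact hρ1 y hy
              _ = |w x - w y| := mul_one _
    have heq : w x - J / I = (∫ y in D, (w x - w y) * ρ y) / I := by
      rw [← hkey]; field_simp
    rw [heq, abs_div, abs_of_pos hI, div_eq_inv_mul]
    exact mul_le_mul_of_nonneg_left habs (inv_nonneg.2 hI.le)
  -- pass to lintegrals
  have hG_lint : ∫⁻ z in D, ENNReal.ofReal ‖fderiv ℝ w z‖ = ENNReal.ofReal R := by
    rw [hRdef, ofReal_integral_eq_lintegral_ofReal hIg
      (Filter.Eventually.of_forall fun z => norm_nonneg _)]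
  have hcore := wp_core hDm hDc hDb hw
  rw [hG_lint] at hcore
  have hBfin : ENNReal.ofReal (Metric.diam D) * (ENNReal.ofReal 2 *
      (volume D * ENNReal.ofReal R)) = ENNReal.ofReal (Metric.diam D * (2 * (V * R))) := by
    rw [ENNReal.ofReal_mul Metric.diam_nonneg, ENNReal.ofReal_mul (by norm_num : (0:ℝ) ≤ 2),
      ENNReal.ofReal_mul hV.le, hVdef, ENNReal.ofReal_toReal hfin]
  rw [hBfin] at hcore
  -- the LHS as a lintegral
  have hLHS : (∫ x in D, |w x - J / I|) = (∫⁻ x in D, ENNReal.ofReal |w x - J / I|).toReal := by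
    exact integral_eq_lintegral_of_nonneg_ae
      (Filter.Eventually.of_forall fun x => abs_nonneg _)
      (Continuous.aestronglyMeasurable ((hw.continuous.sub continuous_const).abs))
  have hlin : ∫⁻ x in D, ENNReal.ofReal |w x - J / I|
      ≤ ENNReal.ofReal I⁻¹ * ∫⁻ x in D, ℓ x := by
    rw [← lintegral_const_mul' _ _ ENNReal.ofReal_ne_top]
    refine setLIntegral_mono' hDm fun x hx => ?_
    calc ENNReal.ofReal |w x - J / I|
        ≤ ENNReal.ofReal (I⁻¹ * ∫ y in D, |w x - w y|) :=
          ENNReal.ofReal_le_ofReal (hpt x hx)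
      _ = ENNReal.ofReal I⁻¹ * ENNReal.ofReal (∫ y in D, |w x - w y|) :=
          ENNReal.ofReal_mul (inv_nonneg.2 hI.le)
      _ = ENNReal.ofReal I⁻¹ * ℓ x := by
          rw [hFℓ x, ENNReal.ofReal_toReal (hℓ_ne x hx)]
  have hchain : ∫⁻ x in D, ENNReal.ofReal |w x - J / I|
      ≤ ENNReal.ofReal (I⁻¹ * (Metric.diam D * (2 * (V * R)))) := by
    calc ∫⁻ x in D, ENNReal.ofReal |w x - J / I|
        ≤ ENNReal.ofReal I⁻¹ * ∫⁻ x in D, ℓ x := hlin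
      _ ≤ ENNReal.ofReal I⁻¹ * ENNReal.ofReal (Metric.diam D * (2 * (V * R))) :=
          mul_le_mul_right hcore _
      _ = ENNReal.ofReal (I⁻¹ * (Metric.diam D * (2 * (V * R)))) :=
          (ENNReal.ofReal_mul (inv_nonneg.2 hI.le)).symm
  have hreal : (∫ x in D, |w x - J / I|) ≤ I⁻¹ * (Metric.diam D * (2 * (V * R))) := by
    rw [hLHS]
    calc (∫⁻ x in D, ENNReal.ofReal |w x - J / I|).toReal
        ≤ (ENNReal.ofReal (I⁻¹ * (Metric.diam D * (2 * (V * R))))).toReal :=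
          ENNReal.toReal_mono ENNReal.ofReal_ne_top hchain
      _ = I⁻¹ * (Metric.diam D * (2 * (V * R))) := ENNReal.toReal_ofReal
            (mul_nonneg (inv_nonneg.2 hI.le)
              (mul_nonneg Metric.diam_nonneg (by positivity)))
  -- final arithmetic
  have hdiam : 0 ≤ Metric.diam D := Metric.diam_nonneg
  have hIinv : I⁻¹ ≤ (θ * V)⁻¹ := by
    exact inv_anti₀ hθV hρθ
  calc (∫ x in D, |w x - J / I|) ≤ I⁻¹ * (Metric.diam D * (2 * (V * R))) := hreal
    _ ≤ (θ * V)⁻¹ * (Metric.diam D * (2 * (V * R))) := by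
        refine mul_le_mul_of_nonneg_right hIinv (by positivity)
    _ = (2 / θ) * Metric.diam D * R := by
        rw [mul_inv]
        field_simp
end

section
/- Let D ⊆ ℝ² be a bounded convex open set, let e be a nondegenerate closed line segment contained in the boundary of D, let θ ∈ (0,1], and let ρ : ℝ² → ℝ be a measurable weight with 0 ≤ ρ ≤ 1 on D and ∫_D ρ dx ≥ θ·|D|. Then there exists a constant C > 0 such that for every continuously differentiable function w : ℝ² → ℝ, ∫_e |w − e_ρ(w)| dH¹ ≤ C·∫_D |∇w| dx, where e_ρ(w) = (∫_D w·ρ dx)/(∫_D ρ dx) and H¹ is the one-dimensional Hausdorff measure. -/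
open MeasureTheory Set ENNReal
set_option maxHeartbeats 1000000
noncomputable section
local notation "E2" => EuclideanSpace ℝ (Fin 2)

lemma ftc_bound {w : E2 → ℝ} (hw : ContDiff ℝ 1 w) (a b : E2) :
    |w b - w a| ≤ ‖b - a‖ * ∫ t in (0:ℝ)..1, ‖fderiv ℝ w (a + t • (b - a))‖ := by
  have hline : ∀ t : ℝ, HasDerivAt (fun t : ℝ => a + t • (b - a)) (b - a) t := by
    intro t
    simpa using ((hasDerivAt_id t).smul_const (b - a)).const_add a
  have hderiv : ∀ t : ℝ, HasDerivAt (fun t => w (a + t • (b - a)))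
      (fderiv ℝ w (a + t • (b - a)) (b - a)) t := fun t =>
    (hw.differentiable one_ne_zero _).hasFDerivAt.comp_hasDerivAt t (hline t)
  have hcontl : Continuous fun t : ℝ => a + t • (b - a) := by continuity
  have hcont : Continuous fun t : ℝ => fderiv ℝ w (a + t • (b - a)) :=
    (hw.continuous_fderiv one_ne_zero).comp hcontl
  have hcont2 : Continuous fun t : ℝ => (fderiv ℝ w (a + t • (b - a))) (b - a) :=
    hcont.clm_apply continuous_const
  have heq : w b - w a = ∫ t in (0:ℝ)..1, (fderiv ℝ w (a + t • (b - a))) (b - a) := by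
    have := intervalIntegral.integral_eq_sub_of_hasDerivAt (f := fun t => w (a + t • (b - a)))
      (f' := fun t => (fderiv ℝ w (a + t • (b - a))) (b - a))
      (fun t _ => hderiv t) (hcont2.intervalIntegrable 0 1)
    simp only [one_smul, zero_smul, add_zero] at this
    rw [show a + (b - a) = b by abel] at this
    exact this.symm
  rw [heq]
  calc |∫ t in (0:ℝ)..1, (fderiv ℝ w (a + t • (b - a))) (b - a)|
      ≤ ∫ t in (0:ℝ)..1, ‖(fderiv ℝ w (a + t • (b - a))) (b - a)‖ := by
        simpa [Real.norm_eq_abs] using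
          intervalIntegral.norm_integral_le_integral_norm (μ := volume)
            (f := fun t => (fderiv ℝ w (a + t • (b - a))) (b - a)) (zero_le_one)
    _ ≤ ∫ t in (0:ℝ)..1, ‖fderiv ℝ w (a + t • (b - a))‖ * ‖b - a‖ := by
        apply intervalIntegral.integral_mono_on zero_le_one
          (hcont2.norm.intervalIntegrable 0 1)
          ((hcont.norm.mul continuous_const).intervalIntegrable 0 1)
        intro t _
        exact (fderiv ℝ w (a + t • (b - a))).le_opNorm (b - a)
    _ = ‖b - a‖ * ∫ t in (0:ℝ)..1, ‖fderiv ℝ w (a + t • (b - a))‖ := by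
        rw [intervalIntegral.integral_mul_const, mul_comm]

lemma scale_bound {F : E2 → ℝ≥0∞} (hF : Measurable F) (a : E2) {r : ℝ}
    (hr : 1/2 ≤ r) (hr1 : r ≤ 1) {S W : Set E2} (hSm : MeasurableSet S)
    (him : (fun y : E2 => a + r • y) '' S ⊆ W) :
    ∫⁻ y in S, F (a + r • y) ≤ 4 * ∫⁻ z in W, F z := by
  have hr0 : (0:ℝ) < r := by linarith
  have hderiv : ∀ y ∈ S, HasFDerivWithinAt (fun y : E2 => a + r • y)
      (r • ContinuousLinearMap.id ℝ (EuclideanSpace ℝ (Fin 2))) S y := fun y _ =>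
    (((hasFDerivAt_id y).const_smul r).const_add a).hasFDerivWithinAt
  have hinj : InjOn (fun y : E2 => a + r • y) S := by
    intro y _ y' _ h
    exact smul_right_injective (EuclideanSpace ℝ (Fin 2)) hr0.ne' (add_left_cancel h)
  have hdet : ((r • ContinuousLinearMap.id ℝ (EuclideanSpace ℝ (Fin 2))) :
      EuclideanSpace ℝ (Fin 2) →L[ℝ] EuclideanSpace ℝ (Fin 2)).det = r ^ 2 := by
    have : ((r • ContinuousLinearMap.id ℝ (EuclideanSpace ℝ (Fin 2))) :
        EuclideanSpace ℝ (Fin 2) →L[ℝ] EuclideanSpace ℝ (Fin 2)).toLinearMap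
        = r • LinearMap.id := by rfl
    rw [ContinuousLinearMap.det, this, LinearMap.det_smul, LinearMap.det_id,
      finrank_euclideanSpace_fin, mul_one]
  have hcov := lintegral_image_eq_lintegral_abs_det_fderiv_mul volume hSm
    (f' := fun _ => r • ContinuousLinearMap.id ℝ (EuclideanSpace ℝ (Fin 2))) hderiv hinj F
  have habs : |r ^ 2| = r ^ 2 := abs_of_pos (by positivity)
  have key : ENNReal.ofReal (r ^ 2) * ∫⁻ y in S, F (a + r • y) ≤ ∫⁻ z in W, F z := by
    rw [← lintegral_const_mul _ (show Measurable fun y : E2 => F (a + r • y) from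
      hF.comp ((measurable_id.const_smul r).const_add a))]
    calc ∫⁻ y in S, ENNReal.ofReal (r ^ 2) * F (a + r • y)
        = ∫⁻ x in (fun y : E2 => a + r • y) '' S, F x := by rw [hcov]; simp [hdet, habs]
      _ ≤ ∫⁻ z in W, F z := lintegral_mono' (Measure.restrict_mono him le_rfl) le_rfl
  calc ∫⁻ y in S, F (a + r • y) = 1 * ∫⁻ y in S, F (a + r • y) := (one_mul _).symm
    _ ≤ (4 * ENNReal.ofReal (r ^ 2)) * ∫⁻ y in S, F (a + r • y) := by
        apply mul_le_mul_left
        have : (1:ℝ≥0∞) = ENNReal.ofReal 1 := by simp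
        rw [this, show (4:ℝ≥0∞) = ENNReal.ofReal 4 by norm_num,
          ← ENNReal.ofReal_mul (by norm_num)]
        exact ENNReal.ofReal_le_ofReal (by nlinarith)
    _ = 4 * (ENNReal.ofReal (r ^ 2) * ∫⁻ y in S, F (a + r • y)) := by ring
    _ ≤ 4 * ∫⁻ z in W, F z := mul_le_mul_right key 4

lemma hausdorff_seg_param {p q : E2} (hpq : p ≠ q) :
    (μH[1] : Measure E2).restrict (segment ℝ p q)
      = Measure.map (fun s : ℝ => p + s • (‖q - p‖⁻¹ • (q - p)))
          (volume.restrict (Icc 0 ‖q - p‖)) := by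
  have hL0 : 0 < ‖q - p‖ := by
    rw [norm_pos_iff, sub_ne_zero]; exact fun h => hpq h.symm
  have hn : ‖q - p‖ ≠ 0 := hL0.ne'
  set u : E2 := ‖q - p‖⁻¹ • (q - p) with hu
  have hunorm : ‖u‖ = 1 := by
    rw [hu, norm_smul, norm_inv, norm_norm, inv_mul_cancel₀ hn]
  set γ : ℝ → E2 := fun s => p + s • u with hγ
  have hiso : Isometry γ := by
    apply Isometry.of_dist_eq
    intro s s'
    simp only [hγ, dist_eq_norm]
    rw [show p + s • u - (p + s' • u) = (s - s') • u from by module,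
      norm_smul, hunorm, mul_one, Real.norm_eq_abs]
  have hseg : segment ℝ p q = γ '' Icc 0 ‖q - p‖ := by
    rw [segment_eq_image']
    ext x
    constructor
    · rintro ⟨t, ht, rfl⟩
      refine ⟨‖q - p‖ * t, ⟨mul_nonneg hL0.le ht.1, by nlinarith [ht.2]⟩, ?_⟩
      simp only [hγ, hu, smul_smul]
      congr 2
      field_simp
    · rintro ⟨s, hs, rfl⟩
      refine ⟨s / ‖q - p‖, ⟨div_nonneg hs.1 hL0.le, by rw [div_le_one hL0]; exact hs.2⟩, ?_⟩
      simp only [hγ, hu, smul_smul]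
      congr 2
  ext S hS
  rw [Measure.map_apply hiso.continuous.measurable hS, Measure.restrict_apply hS,
    Measure.restrict_apply (hiso.continuous.measurable hS)]
  have himg : γ '' (γ ⁻¹' S ∩ Icc 0 ‖q - p‖) = S ∩ segment ℝ p q := by
    rw [hseg, (hiso.injective.injOn).image_inter (subset_univ _) (subset_univ _),
      image_preimage_eq_inter_range, inter_assoc]
    congr 1
    rw [inter_eq_right]
    exact image_subset_range γ _
  symm
  calc volume (γ ⁻¹' S ∩ Icc 0 ‖q - p‖) = μH[1] (γ ⁻¹' S ∩ Icc 0 ‖q - p‖) := by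
        rw [MeasureTheory.hausdorffMeasure_real]
    _ = μH[1] (γ '' (γ ⁻¹' S ∩ Icc 0 ‖q - p‖)) :=
        (hiso.hausdorffMeasure_image (Or.inl zero_le_one) _).symm
    _ = μH[1] (S ∩ segment ℝ p q) := by rw [himg]

lemma cone_bound (D : Set E2) (hDc : Convex ℝ D)
    (p z₀ : E2) (hz₀ : z₀ ∈ D) (u : E2) (L : ℝ)
    (hpe : ∀ s ∈ Icc (0:ℝ) L, p + s • u ∈ closure D)
    (f : E2 →L[ℝ] ℝ) (hfu : f u = 0) (hfd : f (z₀ - p) < 0)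
    (hδ : u 0 * (z₀ - p) 1 - u 1 * (z₀ - p) 0 ≠ 0)
    (hu0 : u ≠ 0)
    (J : Set ℝ) (hJm : MeasurableSet J) (hJsub : J ⊆ Icc (0:ℝ) (1/2))
    (F : E2 → ℝ≥0∞) (hF : Measurable F) :
    ∫⁻ s in Icc (0:ℝ) L, ∫⁻ t in J, F (p + (((1 - t) * s) • u + t • (z₀ - p))) ∂volume ∂volume
      ≤ ENNReal.ofReal (2 / |u 0 * (z₀ - p) 1 - u 1 * (z₀ - p) 0|) * ∫⁻ z in D, F z := by
  set d : E2 := z₀ - p with hd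
  set δ : ℝ := u 0 * d 1 - u 1 * d 0 with hδdef
  have hδpos : 0 < |δ| := abs_pos.2 hδ
  set Ψ : E2 → E2 := fun v => p + (((1 - v 1) * v 0) • u + (v 1) • d) with hΨ
  set S : Set E2 := {v : E2 | v 0 ∈ Icc (0:ℝ) L ∧ v 1 ∈ J} with hSdef
  have hcoord0 : Continuous fun v : E2 => v 0 := (EuclideanSpace.proj (0 : Fin 2)).continuous
  have hcoord1 : Continuous fun v : E2 => v 1 := (EuclideanSpace.proj (1 : Fin 2)).continuous
  have hΨcont : Continuous Ψ := by
    apply Continuous.add continuous_const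
    exact (((continuous_const.sub hcoord1).mul hcoord0).smul continuous_const).add
      (hcoord1.smul continuous_const)
  have hmS : MeasurableSet S :=
    (hcoord0.measurable measurableSet_Icc).inter (hcoord1.measurable hJm)
  set T : (ℝ × ℝ) ≃ᵐ E2 :=
    (MeasurableEquiv.finTwoArrow.symm.trans (MeasurableEquiv.toLp 2 (Fin 2 → ℝ))) with hT
  have hTmp : MeasurePreserving T volume volume := by
    have h1 := (MeasureTheory.volume_preserving_finTwoArrow ℝ).symm
    have h2 := (EuclideanSpace.volume_preserving_symm_measurableEquiv_toLp (Fin 2)).symm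
    exact h2.comp h1
  have hTimg : T '' ((Icc (0:ℝ) L) ×ˢ J) = S := by
    ext v
    rw [MeasurableEquiv.image_eq_preimage_symm]
    constructor
    · rintro ⟨h1, h2⟩; exact ⟨h1, h2⟩
    · rintro ⟨h1, h2⟩; exact ⟨h1, h2⟩
  have step1 :
      ∫⁻ s in Icc (0:ℝ) L, ∫⁻ t in J, F (p + (((1 - t) * s) • u + t • d)) ∂volume ∂volume
        = ∫⁻ v in S, F (Ψ v) ∂volume := by
    have hmeas : AEMeasurable (fun x : ℝ × ℝ => F (Ψ (T x)))
        ((volume.restrict (Icc (0:ℝ) L)).prod (volume.restrict J)) :=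
      ((hF.comp hΨcont.measurable).comp T.measurable).aemeasurable
    calc ∫⁻ s in Icc (0:ℝ) L, ∫⁻ t in J, F (p + (((1 - t) * s) • u + t • d)) ∂volume ∂volume
        = ∫⁻ x : ℝ × ℝ in (Icc (0:ℝ) L) ×ˢ J, F (Ψ (T x)) ∂volume := by
          rw [show ((volume : Measure (ℝ × ℝ)).restrict ((Icc (0:ℝ) L) ×ˢ J))
              = (volume.restrict (Icc (0:ℝ) L)).prod (volume.restrict J) by
            rw [Measure.prod_restrict, ← Measure.volume_eq_prod]]
          rw [MeasureTheory.lintegral_prod _ hmeas]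
          rfl
      _ = ∫⁻ v in T '' ((Icc (0:ℝ) L) ×ˢ J), F (Ψ v) ∂volume :=
          hTmp.setLIntegral_comp_emb T.measurableEmbedding (fun v => F (Ψ v)) _
      _ = ∫⁻ v in S, F (Ψ v) ∂volume := by rw [hTimg]
  rw [step1]
  set P0 : E2 →L[ℝ] ℝ := EuclideanSpace.proj (0 : Fin 2) with hP0
  set P1 : E2 →L[ℝ] ℝ := EuclideanSpace.proj (1 : Fin 2) with hP1
  set A : E2 → (E2 →L[ℝ] E2) := fun v =>
    (((1 - v 1) • P0 + (v 0) • (-P1)).smulRight u) + P1.smulRight d with hA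
  have hAderiv : ∀ v ∈ S, HasFDerivWithinAt Ψ (A v) S v := by
    intro v _
    apply HasFDerivAt.hasFDerivWithinAt
    have hc : HasFDerivAt (fun v : E2 => 1 - v 1) (-P1) v := P1.hasFDerivAt.const_sub 1
    have hd0 : HasFDerivAt (fun v : E2 => v 0) P0 v := P0.hasFDerivAt
    exact (((hc.mul hd0).smul_const u).add (P1.hasFDerivAt.smul_const d)).const_add p
  have hdet : ∀ v : E2, (A v).det = (1 - v 1) * δ := by
    intro v
    have hmat := LinearMap.det_toMatrix (EuclideanSpace.basisFun (Fin 2) ℝ).toBasis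
      ((A v) : E2 →ₗ[ℝ] E2)
    have h0 : (A v).det = LinearMap.det ((A v) : E2 →ₗ[ℝ] E2) := rfl
    rw [h0, ← hmat, Matrix.det_fin_two]
    simp [LinearMap.toMatrix_apply, hA, hP0, hP1, EuclideanSpace.basisFun_apply,
      EuclideanSpace.single_apply, PiLp.proj_apply, PiLp.add_apply, PiLp.smul_apply,
      smul_eq_mul, hδdef]
    ring
  have hone : ∀ v : E2, v ∈ S → (1:ℝ)/2 ≤ 1 - v 1 := by
    intro v hv
    have := (hJsub hv.2).2
    linarith
  have hΨinj : InjOn Ψ S := by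
    intro v hv v' hv' heq
    have hfΨ : ∀ x : E2, f (Ψ x) = f p + (x 1) * f d := by
      intro x
      simp only [hΨ, map_add, ContinuousLinearMap.map_smul, smul_eq_mul, hfu]
      ring
    have ht : v 1 = v' 1 := by
      have hfc := congrArg f heq
      rw [hfΨ, hfΨ] at hfc
      exact mul_right_cancel₀ (ne_of_lt hfd) (by linarith)
    have heq2 : ((1 - v 1) * v 0) • u + (v 1) • d = ((1 - v' 1) * v' 0) • u + (v' 1) • d := by
      have := heq
      simp only [hΨ] at this
      exact add_left_cancel this
    rw [ht] at heq2
    have heq3 : ((1 - v' 1) * v 0) • u = ((1 - v' 1) * v' 0) • u := add_right_cancel heq2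
    have heq4 : (((1 - v' 1) * v 0) - ((1 - v' 1) * v' 0)) • u = 0 := by
      rw [sub_smul, heq3, sub_self]
    have h12 : (1:ℝ) - v' 1 ≠ 0 := by have := hone v' hv'; linarith
    have hx0 : v 0 = v' 0 := by
      rcases smul_eq_zero.1 heq4 with h | h
      · have := sub_eq_zero.1 h
        exact mul_left_cancel₀ h12 this
      · exact absurd h hu0
    ext i
    fin_cases i
    · exact hx0
    · exact ht
  have himg : Ψ '' S ⊆ closure D := by
    rintro - ⟨v, hv, rfl⟩
    have hs := hv.1
    have ht' := hJsub hv.2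
    have hx : p + (v 0) • u ∈ closure D := hpe _ hs
    have hzc : z₀ ∈ closure D := subset_closure hz₀
    have hcomb := (hDc.closure) hx hzc
      (by linarith [ht'.2] : (0:ℝ) ≤ 1 - v 1) ht'.1 (by ring)
    have hrw : Ψ v = (1 - v 1) • (p + (v 0) • u) + (v 1) • z₀ := by
      simp only [hΨ, hd]
      match_scalars <;> ring
    rwa [hrw]
  have hcov := lintegral_image_eq_lintegral_abs_det_fderiv_mul volume hmS hAderiv hΨinj F
  have hcov' : ∫⁻ x in Ψ '' S, F x ∂volume
      = ∫⁻ v in S, ENNReal.ofReal |(1 - v 1) * δ| * F (Ψ v) ∂volume := by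
    rw [hcov]
    apply lintegral_congr
    intro v
    rw [hdet]
  set c2 : ℝ≥0∞ := ENNReal.ofReal (2 / |δ|) with hc2
  have hintmeas : Measurable fun v : E2 => ENNReal.ofReal |(1 - v 1) * δ| * F (Ψ v) :=
    (((continuous_const.sub hcoord1).mul continuous_const).abs.measurable.ennreal_ofReal).mul
      (hF.comp hΨcont.measurable)
  have key : ∫⁻ v in S, F (Ψ v) ∂volume
      ≤ c2 * ∫⁻ v in S, ENNReal.ofReal |(1 - v 1) * δ| * F (Ψ v) ∂volume := by
    rw [← lintegral_const_mul _ hintmeas]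
    apply lintegral_mono_ae
    refine (ae_restrict_iff' hmS).2 (Filter.Eventually.of_forall ?_)
    intro v hv
    have h12 := hone v hv
    have habs : |(1 - v 1) * δ| = (1 - v 1) * |δ| := by
      rw [abs_mul, abs_of_nonneg (by linarith : (0:ℝ) ≤ 1 - v 1)]
    have hsc : (1:ℝ) ≤ 2 / |δ| * |(1 - v 1) * δ| := by
      rw [habs]
      have h2 : 2 / |δ| * ((1 - v 1) * |δ|) = 2 * (1 - v 1) := by
        field_simp
      rw [h2]
      linarith
    calc F (Ψ v) = 1 * F (Ψ v) := (one_mul _).symm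
      _ ≤ (c2 * ENNReal.ofReal |(1 - v 1) * δ|) * F (Ψ v) := by
          apply mul_le_mul_left
          rw [hc2, ← ENNReal.ofReal_mul (by positivity)]
          calc (1:ℝ≥0∞) = ENNReal.ofReal 1 := by simp
            _ ≤ ENNReal.ofReal (2 / |δ| * |(1 - v 1) * δ|) := ENNReal.ofReal_le_ofReal hsc
      _ = c2 * (ENNReal.ofReal |(1 - v 1) * δ| * F (Ψ v)) := by ring
  have hclD : (volume : Measure E2).restrict (closure D) = volume.restrict D := by
    apply Measure.restrict_congr_set
    refine ae_eq_set.2 ⟨?_, ?_⟩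
    · apply measure_mono_null _ (hDc.addHaar_frontier volume)
      intro x hx
      exact ⟨hx.1, fun hint => hx.2 (interior_subset hint)⟩
    · have hempty : D \ closure D = ∅ := diff_eq_empty.2 subset_closure
      simp [hempty]
  calc ∫⁻ v in S, F (Ψ v) ∂volume
      ≤ c2 * ∫⁻ v in S, ENNReal.ofReal |(1 - v 1) * δ| * F (Ψ v) ∂volume := key
    _ = c2 * ∫⁻ x in Ψ '' S, F x ∂volume := by rw [← hcov']
    _ ≤ c2 * ∫⁻ z in closure D, F z ∂volume :=
        mul_le_mul_right (lintegral_mono' (Measure.restrict_mono himg le_rfl) le_rfl) _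
    _ = c2 * ∫⁻ z in D, F z ∂volume := by rw [hclD]
/-- Trace-type approximation property (Lemma 5.4, second estimate): for a bounded
convex open set `D ⊆ ℝ²`, a nondegenerate closed segment `e ⊆ ∂D`, and a weight
`0 ≤ ρ ≤ 1` on `D` with `∫_D ρ ≥ θ·|D|`, there is `C > 0` such that for every `C¹`
function `w`, `∫_e |w - e_ρ(w)| dH¹ ≤ C·∫_D |∇w|`, where
`e_ρ(w) = (∫_D w·ρ)/(∫_D ρ)`. -/
theorem trace_weighted_poincare_L1
    (D : Set (EuclideanSpace ℝ (Fin 2)))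
    (hDo : IsOpen D) (hDb : Bornology.IsBounded D) (hDc : Convex ℝ D)
    (e : Set (EuclideanSpace ℝ (Fin 2)))
    (hseg : ∃ p q : EuclideanSpace ℝ (Fin 2), p ≠ q ∧ e = segment ℝ p q)
    (heD : e ⊆ frontier D)
    (θ : ℝ) (hθ : θ ∈ Set.Ioc (0 : ℝ) 1)
    (ρ : EuclideanSpace ℝ (Fin 2) → ℝ) (hρm : Measurable ρ)
    (hρ0 : ∀ x ∈ D, 0 ≤ ρ x) (hρ1 : ∀ x ∈ D, ρ x ≤ 1)
    (hρθ : θ * (volume D).toReal ≤ ∫ x in D, ρ x) :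
    ∃ C > 0, ∀ w : EuclideanSpace ℝ (Fin 2) → ℝ, ContDiff ℝ 1 w →
      (∫ x in e,
          |w x - (∫ y in D, w y * ρ y) / ∫ y in D, ρ y| ∂(μH[1])) ≤
        C * ∫ x in D, ‖fderiv ℝ w x‖ := by
  obtain ⟨p, q, hpq, he⟩ := hseg
  have hDm : MeasurableSet D := hDo.measurableSet
  have hpf : p ∈ frontier D := heD (he ▸ left_mem_segment ℝ p q)
  have hDne : D.Nonempty := by
    by_contra hne
    rw [not_nonempty_iff_eq_empty] at hne
    rw [hne, frontier_empty] at hpf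
    exact hpf
  obtain ⟨z₀, hz₀⟩ := hDne
  have hVD0 : volume D ≠ 0 := (hDo.measure_pos volume ⟨z₀, hz₀⟩).ne'
  have hVDt : volume D ≠ ⊤ := hDb.measure_lt_top.ne
  have hvolpos : 0 < (volume D).toReal := ENNReal.toReal_pos hVD0 hVDt
  set ρI : ℝ := ∫ y in D, ρ y with hρI
  have hρIpos : 0 < ρI := lt_of_lt_of_le (mul_pos hθ.1 hvolpos) hρθ
  have hK : IsCompact (closure D) :=
    Metric.isCompact_of_isClosed_isBounded isClosed_closure hDb.closure
  set R : ℝ := Metric.diam (closure D) + 1 with hR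
  have hRpos : 0 < R := by
    have := Metric.diam_nonneg (s := closure D); rw [hR]; linarith
  have hRd : ∀ x ∈ closure D, ∀ y ∈ closure D, ‖x - y‖ ≤ R := by
    intro x hx y hy
    rw [← dist_eq_norm, hR]
    linarith [Metric.dist_le_diam_of_mem hDb.closure hx hy]
  -- supporting functional
  have hmem : midpoint ℝ p q ∈ frontier D := heD (he ▸ midpoint_mem_segment p q)
  have hmD : midpoint ℝ p q ∉ D := by
    rw [hDo.frontier_eq] at hmem; exact hmem.2
  obtain ⟨f, hf⟩ := geometric_hahn_banach_open_point hDc hDo hmD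
  have hcl : ∀ x ∈ closure D, f x ≤ f (midpoint ℝ p q) := fun x hx =>
    (closure_minimal (fun a ha => (hf a ha).le)
      (isClosed_le f.continuous continuous_const)) hx
  have hsum : f (midpoint ℝ p q) + f (midpoint ℝ p q) = f p + f q := by
    rw [← map_add, ← map_add, midpoint_add_self]
  have hfp : f p = f (midpoint ℝ p q) := by
    have h1 := hcl p (frontier_subset_closure hpf)
    have h2 := hcl q (frontier_subset_closure (heD (he ▸ right_mem_segment ℝ p q)))
    linarith
  have hfq : f q = f (midpoint ℝ p q) := by
    have h1 := hcl p (frontier_subset_closure hpf)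
    have h2 := hcl q (frontier_subset_closure (heD (he ▸ right_mem_segment ℝ p q)))
    linarith
  set L : ℝ := ‖q - p‖ with hLdef
  have hL0 : 0 < L := by
    rw [hLdef, norm_pos_iff, sub_ne_zero]; exact fun h => hpq h.symm
  set u : EuclideanSpace ℝ (Fin 2) := ‖q - p‖⁻¹ • (q - p) with hu
  have hunorm : ‖u‖ = 1 := by
    rw [hu, norm_smul, norm_inv, norm_norm, inv_mul_cancel₀ hL0.ne']
  have hu0 : u ≠ 0 := by
    intro h; rw [h, norm_zero] at hunorm; exact one_ne_zero hunorm.symm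
  have hfu : f u = 0 := by
    rw [hu, ContinuousLinearMap.map_smul, map_sub, smul_eq_mul, hfq, hfp]
    ring
  have hfd : f (z₀ - p) < 0 := by
    rw [map_sub]
    have := hf z₀ hz₀
    linarith [hfp]
  set dd : EuclideanSpace ℝ (Fin 2) := z₀ - p with hdd
  set δ : ℝ := u 0 * dd 1 - u 1 * dd 0 with hδdef
  have hδ : δ ≠ 0 := by
    intro h0
    set Afn := f (EuclideanSpace.single (0 : Fin 2) (1:ℝ)) with hAfn
    set Bfn := f (EuclideanSpace.single (1 : Fin 2) (1:ℝ)) with hBfn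
    have hdecomp : ∀ x : EuclideanSpace ℝ (Fin 2), f x = x 0 * Afn + x 1 * Bfn := by
      intro x
      have hx : x = x 0 • (EuclideanSpace.single (0 : Fin 2) (1:ℝ))
          + x 1 • (EuclideanSpace.single (1 : Fin 2) (1:ℝ)) := by
        ext i
        fin_cases i <;> simp [EuclideanSpace.single_apply]
      conv_lhs => rw [hx]
      rw [map_add, ContinuousLinearMap.map_smul, ContinuousLinearMap.map_smul,
        smul_eq_mul, smul_eq_mul]
    have hδ0 : u 0 * dd 1 - u 1 * dd 0 = 0 := by rw [← hδdef]; exact h0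
    have k0 : u 0 * f dd = dd 0 * f u := by
      rw [hdecomp dd, hdecomp u]
      linear_combination Bfn * hδ0
    have k1 : u 1 * f dd = dd 1 * f u := by
      rw [hdecomp dd, hdecomp u]
      linear_combination (-Afn) * hδ0
    have hcases : u 0 ≠ 0 ∨ u 1 ≠ 0 := by
      by_contra hcon
      push_neg at hcon
      apply hu0
      ext i
      fin_cases i <;> simp [hcon.1, hcon.2]
    have hfdd : f dd < 0 := hfd
    rcases hcases with h | h
    · rw [hfu, mul_zero] at k0
      have := (mul_eq_zero.1 k0).resolve_left h
      linarith
    · rw [hfu, mul_zero] at k1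
      have := (mul_eq_zero.1 k1).resolve_left h
      linarith
  have hpe : ∀ s ∈ Set.Icc (0:ℝ) L, p + s • u ∈ closure D := by
    intro s hs
    have hseg' : p + s • u ∈ segment ℝ p q := by
      rw [segment_eq_image']
      refine ⟨s / L, ⟨div_nonneg hs.1 hL0.le, by rw [div_le_one hL0]; exact hs.2⟩, ?_⟩
      simp only [hu, smul_smul]
      congr 2
    exact frontier_subset_closure (heD (he ▸ hseg'))
  -- constants
  set c2 : ℝ≥0∞ := ENNReal.ofReal (2 / |δ|) with hc2
  set VD : ℝ≥0∞ := volume D with hVDdef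
  set Kp : ℝ≥0∞ := ENNReal.ofReal ρI⁻¹ * (ENNReal.ofReal R * (8 * VD)) with hKp
  set Cfin : ℝ≥0∞ := 4 * c2 * Kp + ENNReal.ofReal R * c2 with hCfin
  have hVDne : VD ≠ ⊤ := hVDt
  have hKptop : Kp ≠ ⊤ := by
    rw [hKp]
    exact ENNReal.mul_ne_top ENNReal.ofReal_ne_top
      (ENNReal.mul_ne_top ENNReal.ofReal_ne_top
        (ENNReal.mul_ne_top (by norm_num) hVDne))
  have hCtop : Cfin ≠ ⊤ := by
    rw [hCfin]
    exact ENNReal.add_ne_top.2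
      ⟨ENNReal.mul_ne_top (ENNReal.mul_ne_top (by norm_num) ENNReal.ofReal_ne_top) hKptop,
       ENNReal.mul_ne_top ENNReal.ofReal_ne_top ENNReal.ofReal_ne_top⟩
  have hCpos : (0:ℝ) < Cfin.toReal + 1 := by
    have := ENNReal.toReal_nonneg (a := Cfin); linarith
  refine ⟨Cfin.toReal + 1, hCpos, ?_⟩
  intro w hw
  set g : EuclideanSpace ℝ (Fin 2) → ℝ := fun x => ‖fderiv ℝ w x‖ with hg
  have hgc : Continuous g := (hw.continuous_fderiv one_ne_zero).norm
  set G : EuclideanSpace ℝ (Fin 2) → ℝ≥0∞ := fun x => ENNReal.ofReal (g x) with hG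
  have hGm : Measurable G := hgc.measurable.ennreal_ofReal
  have hGcont : Continuous G := ENNReal.continuous_ofReal.comp hgc
  set cc : ℝ := (∫ y in D, w y * ρ y) / ρI with hcc
  set v : EuclideanSpace ℝ (Fin 2) → ℝ := fun x => w x - cc with hv
  have hvc : Continuous v := hw.continuous.sub continuous_const
  have hvC1 : ContDiff ℝ 1 v := hw.sub contDiff_const
  have hfderiv_v : ∀ y, fderiv ℝ v y = fderiv ℝ w y := fun y => fderiv_sub_const cc
  set V : EuclideanSpace ℝ (Fin 2) → ℝ≥0∞ := fun x => ENNReal.ofReal |v x| with hVdef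
  have hVm : Measurable V := hvc.abs.measurable.ennreal_ofReal
  have hVcont : Continuous V := ENNReal.continuous_ofReal.comp hvc.abs
  set IG : ℝ≥0∞ := ∫⁻ x in D, G x ∂volume with hIG
  set IV : ℝ≥0∞ := ∫⁻ x in D, V x ∂volume with hIV
  obtain ⟨Mg, hMg⟩ := hK.exists_bound_of_continuousOn hgc.continuousOn
  have hIGtop : IG ≠ ⊤ := by
    have hle : IG ≤ ENNReal.ofReal Mg * VD := by
      rw [hIG, hVDdef]
      calc ∫⁻ x in D, G x ∂volume ≤ ∫⁻ _x in D, ENNReal.ofReal Mg ∂volume := by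
            apply setLIntegral_mono measurable_const
            intro x hx
            apply ENNReal.ofReal_le_ofReal
            have := hMg x (subset_closure hx)
            rw [Real.norm_eq_abs, abs_of_nonneg (norm_nonneg _)] at this
            exact this
        _ = ENNReal.ofReal Mg * volume D := by rw [setLIntegral_const]
    exact (lt_of_le_of_lt hle (ENNReal.mul_lt_top ENNReal.ofReal_lt_top hVDne.lt_top)).ne
  obtain ⟨Mw, hMw⟩ := hK.exists_bound_of_continuousOn hw.continuous.continuousOn
  have hρD : IntegrableOn ρ D volume := by
    apply Measure.integrableOn_of_bounded (M := 1) hVDt hρm.aestronglyMeasurable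
    refine (ae_restrict_iff' hDm).2 (Filter.Eventually.of_forall ?_)
    intro y hy
    rw [Real.norm_eq_abs, abs_le]
    exact ⟨by linarith [hρ0 y hy], hρ1 y hy⟩
  have hwρD : IntegrableOn (fun y => w y * ρ y) D volume := by
    apply Measure.integrableOn_of_bounded (M := |Mw|) hVDt
      (hw.continuous.measurable.mul hρm).aestronglyMeasurable
    refine (ae_restrict_iff' hDm).2 (Filter.Eventually.of_forall ?_)
    intro y hy
    have h1 := hMw y (subset_closure hy)
    rw [Real.norm_eq_abs, Pi.mul_apply, abs_mul]
    have h2 : |ρ y| ≤ 1 := abs_le.2 ⟨by linarith [hρ0 y hy], hρ1 y hy⟩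
    have h3 : |w y| ≤ |Mw| := le_trans (by rwa [Real.norm_eq_abs] at h1) (le_abs_self _)
    nlinarith [abs_nonneg (w y), abs_nonneg (ρ y)]
  -- mean bound
  have hmean : ∀ x : EuclideanSpace ℝ (Fin 2),
      V x ≤ ENNReal.ofReal ρI⁻¹ * ∫⁻ y in D, ENNReal.ofReal |w x - w y| ∂volume := by
    intro x
    have hint2 : IntegrableOn (fun y => |w x - w y|) D volume :=
      (((continuous_const.sub hw.continuous).abs).continuousOn.integrableOn_compact hK).mono_set
        subset_closure
    have hint1 : IntegrableOn (fun y => (w x - w y) * ρ y) D volume := by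
      apply Measure.integrableOn_of_bounded (M := (|w x| + |Mw|)) hVDt
        ((continuous_const.sub hw.continuous).measurable.mul hρm).aestronglyMeasurable
      refine (ae_restrict_iff' hDm).2 (Filter.Eventually.of_forall ?_)
      intro y hy
      have h1 := hMw y (subset_closure hy)
      rw [Real.norm_eq_abs] at h1 ⊢
      simp only [Pi.mul_apply, Pi.sub_apply]
      rw [abs_mul]
      have h2 : |ρ y| ≤ 1 := abs_le.2 ⟨by linarith [hρ0 y hy], hρ1 y hy⟩
      have h3 : |w x - w y| ≤ |w x| + |Mw| := by
        have := abs_sub (w x) (w y)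
        have h4 : |w y| ≤ |Mw| := le_trans h1 (le_abs_self _)
        calc |w x - w y| ≤ |w x| + |w y| := abs_sub _ _
          _ ≤ |w x| + |Mw| := by linarith
      nlinarith [abs_nonneg (w x - w y), abs_nonneg (ρ y)]
    have hkey : w x - cc = ρI⁻¹ * ∫ y in D, (w x - w y) * ρ y := by
      have hfun : (fun y => (w x - w y) * ρ y) = (fun y => w x * ρ y - w y * ρ y) := by
        funext y; ring
      have hsplit : ∫ y in D, (w x - w y) * ρ y = w x * ρI - ∫ y in D, w y * ρ y := by
        rw [hfun, integral_sub (hρD.const_mul (w x)) hwρD, integral_const_mul, hρI]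
      rw [hcc, hsplit]
      field_simp
    have habs : |v x| ≤ ρI⁻¹ * ∫ y in D, |w x - w y| := by
      have hvx : v x = w x - cc := rfl
      rw [hvx, hkey, abs_mul, abs_of_nonneg (inv_nonneg.2 hρIpos.le)]
      apply mul_le_mul_of_nonneg_left _ (inv_nonneg.2 hρIpos.le)
      calc |∫ y in D, (w x - w y) * ρ y| ≤ ∫ y in D, |(w x - w y) * ρ y| := by
            have hni := norm_integral_le_integral_norm (μ := volume.restrict D)
              (fun y => (w x - w y) * ρ y)
            simp only [Real.norm_eq_abs] at hni
            exact hni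
        _ ≤ ∫ y in D, |w x - w y| := by
            apply setIntegral_mono_on hint1.abs hint2 hDm
            intro y hy
            rw [abs_mul]
            apply mul_le_of_le_one_right (abs_nonneg _)
            exact abs_le.2 ⟨by linarith [hρ0 y hy], hρ1 y hy⟩
    calc V x = ENNReal.ofReal |v x| := rfl
      _ ≤ ENNReal.ofReal (ρI⁻¹ * ∫ y in D, |w x - w y|) := ENNReal.ofReal_le_ofReal habs
      _ = ENNReal.ofReal ρI⁻¹ * ENNReal.ofReal (∫ y in D, |w x - w y|) :=
          ENNReal.ofReal_mul (inv_nonneg.2 hρIpos.le)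
      _ = ENNReal.ofReal ρI⁻¹ * ∫⁻ y in D, ENNReal.ofReal |w x - w y| ∂volume := by
          rw [ofReal_integral_eq_lintegral_ofReal hint2
            (Filter.Eventually.of_forall fun y => abs_nonneg _)]
  -- FTC bound in ennreal form
  have hftc : ∀ x ∈ closure D, ∀ y ∈ closure D,
      ENNReal.ofReal |w x - w y|
        ≤ ENNReal.ofReal R * ∫⁻ t in Ioc (0:ℝ) 1, G (x + t • (y - x)) ∂volume := by
    intro x hx y hy
    have h1 := ftc_bound hw x y
    have hcont : Continuous fun t : ℝ => g (x + t • (y - x)) :=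
      hgc.comp (continuous_const.add (continuous_id.smul continuous_const))
    have hIoc : IntegrableOn (fun t => g (x + t • (y - x))) (Ioc (0:ℝ) 1) volume :=
      hcont.integrableOn_Ioc
    have h2 : ∫ t in (0:ℝ)..1, g (x + t • (y - x)) = ∫ t in Ioc (0:ℝ) 1, g (x + t • (y - x)) :=
      intervalIntegral.integral_of_le zero_le_one
    calc ENNReal.ofReal |w x - w y| = ENNReal.ofReal |w y - w x| := by rw [abs_sub_comm]
      _ ≤ ENNReal.ofReal (‖y - x‖ * ∫ t in Ioc (0:ℝ) 1, g (x + t • (y - x))) := by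
          apply ENNReal.ofReal_le_ofReal
          rw [← h2]
          exact h1
      _ = ENNReal.ofReal ‖y - x‖ * ENNReal.ofReal (∫ t in Ioc (0:ℝ) 1, g (x + t • (y - x))) :=
          ENNReal.ofReal_mul (norm_nonneg _)
      _ = ENNReal.ofReal ‖y - x‖ * ∫⁻ t in Ioc (0:ℝ) 1, G (x + t • (y - x)) ∂volume := by
          rw [ofReal_integral_eq_lintegral_ofReal hIoc
            (Filter.Eventually.of_forall fun t => norm_nonneg _)]
      _ ≤ ENNReal.ofReal R * ∫⁻ t in Ioc (0:ℝ) 1, G (x + t • (y - x)) ∂volume := by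
          apply mul_le_mul_left
          exact ENNReal.ofReal_le_ofReal (hRd y hy x hx)
    -- measurability helpers
  have hmyt : ∀ (x : EuclideanSpace ℝ (Fin 2)) (J : Set ℝ),
      Measurable fun y : EuclideanSpace ℝ (Fin 2) => ∫⁻ t in J, G (x + t • (y - x)) ∂volume := by
    intro x J
    apply Measurable.lintegral_prod_right'
      (f := fun z : EuclideanSpace ℝ (Fin 2) × ℝ => G (x + z.2 • (z.1 - x)))
    exact (hGcont.comp (continuous_const.add
      (continuous_snd.smul (continuous_fst.sub continuous_const)))).measurable
  have hmxy : ∀ (J : Set ℝ),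
      Measurable fun x : EuclideanSpace ℝ (Fin 2) =>
        ∫⁻ y in D, ∫⁻ t in J, G (x + t • (y - x)) ∂volume ∂volume := by
    intro J
    apply Measurable.lintegral_prod_right'
      (f := fun pr : EuclideanSpace ℝ (Fin 2) × EuclideanSpace ℝ (Fin 2) =>
        ∫⁻ t in J, G (pr.1 + t • (pr.2 - pr.1)) ∂volume)
    apply Measurable.lintegral_prod_right'
      (f := fun z : (EuclideanSpace ℝ (Fin 2) × EuclideanSpace ℝ (Fin 2)) × ℝ =>
        G (z.1.1 + z.2 • (z.1.2 - z.1.1)))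
    refine (hGcont.comp ?_).measurable
    exact (continuous_fst.fst).add
      (continuous_snd.smul ((continuous_fst.snd).sub (continuous_fst.fst)))
  have htermA : ∀ x ∈ D,
      ∫⁻ y in D, ∫⁻ t in Ioc (1/2:ℝ) 1, G (x + t • (y - x)) ∂volume ∂volume ≤ 4 * IG := by
    intro x hx
    have hswap : ∫⁻ y in D, ∫⁻ t in Ioc (1/2:ℝ) 1, G (x + t • (y - x)) ∂volume ∂volume
        = ∫⁻ t in Ioc (1/2:ℝ) 1, ∫⁻ y in D, G (x + t • (y - x)) ∂volume ∂volume :=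
      lintegral_lintegral_swap ((hGcont.comp (continuous_const.add
        (continuous_snd.smul (continuous_fst.sub continuous_const)))).measurable.aemeasurable)
    rw [hswap]
    calc ∫⁻ t in Ioc (1/2:ℝ) 1, ∫⁻ y in D, G (x + t • (y - x)) ∂volume ∂volume
        ≤ ∫⁻ _t in Ioc (1/2:ℝ) 1, 4 * IG ∂volume := by
          apply lintegral_mono_ae
          refine (ae_restrict_iff' measurableSet_Ioc).2 (Filter.Eventually.of_forall ?_)
          intro t ht
          have hcg : ∫⁻ y in D, G (x + t • (y - x)) ∂volume
              = ∫⁻ y in D, G ((x - t • x) + t • y) ∂volume :=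
            lintegral_congr fun y => by
              rw [show x + t • (y - x) = (x - t • x) + t • y from by module]
          rw [hcg]
          exact scale_bound hGm (x - t • x) ht.1.le ht.2 hDm (by
            rintro - ⟨y, hy, rfl⟩
            show x - t • x + t • y ∈ D
            have hcv : x - t • x + t • y = (1 - t) • x + t • y := by module
            rw [hcv]
            exact hDc hx hy (by linarith [ht.2]) (by linarith [ht.1]) (by ring))
      _ = (4 * IG) * volume (Ioc (1/2:ℝ) 1) := setLIntegral_const _ _
      _ ≤ (4 * IG) * 1 := by
          apply mul_le_mul_right
          rw [Real.volume_Ioc]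
          exact ENNReal.ofReal_le_one.2 (by norm_num)
      _ = 4 * IG := mul_one _
  have hA : ∫⁻ x in D, ∫⁻ y in D, ∫⁻ t in Ioc (1/2:ℝ) 1,
      G (x + t • (y - x)) ∂volume ∂volume ∂volume ≤ VD * (4 * IG) := by
    calc ∫⁻ x in D, ∫⁻ y in D, ∫⁻ t in Ioc (1/2:ℝ) 1, G (x + t • (y - x)) ∂volume ∂volume ∂volume
        ≤ ∫⁻ _x in D, 4 * IG ∂volume := by
          apply lintegral_mono_ae
          refine (ae_restrict_iff' hDm).2 (Filter.Eventually.of_forall ?_)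
          intro x hx
          exact htermA x hx
      _ = (4 * IG) * volume D := setLIntegral_const _ _
      _ = VD * (4 * IG) := by rw [hVDdef]; ring
  have hB : ∫⁻ x in D, ∫⁻ y in D, ∫⁻ t in Ioc (0:ℝ) (1/2),
      G (x + t • (y - x)) ∂volume ∂volume ∂volume ≤ VD * (4 * IG) := by
    set ν : Measure (EuclideanSpace ℝ (Fin 2) × ℝ) :=
      (volume.restrict D).prod (volume.restrict (Ioc (0:ℝ) (1/2))) with hν
    have hmeas1 : ∀ x : EuclideanSpace ℝ (Fin 2), AEMeasurable
        (fun z : EuclideanSpace ℝ (Fin 2) × ℝ => G (x + z.2 • (z.1 - x))) ν :=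
      fun x => (hGcont.comp (continuous_const.add
        (continuous_snd.smul (continuous_fst.sub continuous_const)))).measurable.aemeasurable
    have hstep1 : ∫⁻ x in D, ∫⁻ y in D, ∫⁻ t in Ioc (0:ℝ) (1/2),
        G (x + t • (y - x)) ∂volume ∂volume ∂volume
        = ∫⁻ x in D, ∫⁻ z : EuclideanSpace ℝ (Fin 2) × ℝ,
            G (x + z.2 • (z.1 - x)) ∂ν ∂volume := by
      apply lintegral_congr
      intro x
      exact (lintegral_prod _ (hmeas1 x)).symm
    have hmeas2 : AEMeasurable
        (Function.uncurry fun (x : EuclideanSpace ℝ (Fin 2)) (z : EuclideanSpace ℝ (Fin 2) × ℝ)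
          => G (x + z.2 • (z.1 - x))) ((volume.restrict D).prod ν) := by
      refine (hGcont.comp ?_).measurable.aemeasurable
      exact continuous_fst.add ((continuous_snd.snd).smul ((continuous_snd.fst).sub continuous_fst))
    have hswap : ∫⁻ x in D, ∫⁻ z : EuclideanSpace ℝ (Fin 2) × ℝ,
          G (x + z.2 • (z.1 - x)) ∂ν ∂volume
        = ∫⁻ z : EuclideanSpace ℝ (Fin 2) × ℝ, ∫⁻ x in D,
            G (x + z.2 • (z.1 - x)) ∂volume ∂ν :=
      lintegral_lintegral_swap hmeas2
    rw [hstep1, hswap]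
    have hae : ∀ᵐ z : EuclideanSpace ℝ (Fin 2) × ℝ ∂ν,
        z.1 ∈ D ∧ z.2 ∈ Ioc (0:ℝ) (1/2) := by
      rw [hν, Measure.prod_restrict]
      refine (ae_restrict_iff' (hDm.prod measurableSet_Ioc)).2 (Filter.Eventually.of_forall ?_)
      intro z hz
      exact hz
    calc ∫⁻ z : EuclideanSpace ℝ (Fin 2) × ℝ, ∫⁻ x in D, G (x + z.2 • (z.1 - x)) ∂volume ∂ν
        ≤ ∫⁻ _z : EuclideanSpace ℝ (Fin 2) × ℝ, 4 * IG ∂ν := by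
          apply lintegral_mono_ae
          filter_upwards [hae] with z hz
          have hcg : ∫⁻ x in D, G (x + z.2 • (z.1 - x)) ∂volume
              = ∫⁻ x in D, G ((z.2 • z.1) + (1 - z.2) • x) ∂volume :=
            lintegral_congr fun x => by
              rw [show x + z.2 • (z.1 - x) = (z.2 • z.1) + (1 - z.2) • x from by module]
          rw [hcg]
          exact scale_bound hGm (z.2 • z.1) (by linarith [hz.2.2]) (by linarith [hz.2.1.le]) hDm (by
            rintro - ⟨x, hxD, rfl⟩
            show z.2 • z.1 + (1 - z.2) • x ∈ D
            exact hDc hz.1 hxD hz.2.1.le (by linarith [hz.2.2]) (by ring))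
      _ = (4 * IG) * ν univ := lintegral_const _
      _ ≤ VD * (4 * IG) := by
          rw [hν, ← univ_prod_univ, Measure.prod_prod, Measure.restrict_apply_univ,
            Measure.restrict_apply_univ, Real.volume_Ioc]
          calc (4 * IG) * (volume D * ENNReal.ofReal (1/2 - 0))
              ≤ (4 * IG) * (volume D * 1) := by
                apply mul_le_mul_right
                apply mul_le_mul_right
                exact ENNReal.ofReal_le_one.2 (by norm_num)
            _ = VD * (4 * IG) := by rw [mul_one, ← hVDdef]; ring
  have hTriple : ∫⁻ x in D, ∫⁻ y in D, ∫⁻ t in Ioc (0:ℝ) 1,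
      G (x + t • (y - x)) ∂volume ∂volume ∂volume ≤ 8 * VD * IG := by
    have hsplit : ∀ x y : EuclideanSpace ℝ (Fin 2),
        ∫⁻ t in Ioc (0:ℝ) 1, G (x + t • (y - x)) ∂volume
          = ∫⁻ t in Ioc (0:ℝ) (1/2), G (x + t • (y - x)) ∂volume
            + ∫⁻ t in Ioc (1/2:ℝ) 1, G (x + t • (y - x)) ∂volume := by
      intro x y
      rw [← Ioc_union_Ioc_eq_Ioc (by norm_num : (0:ℝ) ≤ 1/2) (by norm_num : (1/2:ℝ) ≤ 1),
        lintegral_union measurableSet_Ioc (Ioc_disjoint_Ioc_of_le le_rfl)]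
    calc ∫⁻ x in D, ∫⁻ y in D, ∫⁻ t in Ioc (0:ℝ) 1, G (x + t • (y - x)) ∂volume ∂volume ∂volume
        = ∫⁻ x in D, ((∫⁻ y in D, ∫⁻ t in Ioc (0:ℝ) (1/2), G (x + t • (y - x)) ∂volume ∂volume)
            + ∫⁻ y in D, ∫⁻ t in Ioc (1/2:ℝ) 1, G (x + t • (y - x)) ∂volume ∂volume) ∂volume := by
          apply lintegral_congr
          intro x
          rw [← lintegral_add_left (hmyt x _)]
          apply lintegral_congr
          intro y
          exact hsplit x y
      _ = (∫⁻ x in D, ∫⁻ y in D, ∫⁻ t in Ioc (0:ℝ) (1/2), G (x + t • (y - x)) ∂volume ∂volume ∂volume)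
            + ∫⁻ x in D, ∫⁻ y in D, ∫⁻ t in Ioc (1/2:ℝ) 1, G (x + t • (y - x)) ∂volume ∂volume ∂volume :=
          lintegral_add_left (hmxy _) _
      _ ≤ VD * (4 * IG) + VD * (4 * IG) := add_le_add hB hA
      _ = 8 * VD * IG := by ring
  have hPoinc : IV ≤ Kp * IG := by
    have hmx : Measurable fun x : EuclideanSpace ℝ (Fin 2) =>
        ∫⁻ y in D, ENNReal.ofReal |w x - w y| ∂volume := by
      apply Measurable.lintegral_prod_right'
        (f := fun pr : EuclideanSpace ℝ (Fin 2) × EuclideanSpace ℝ (Fin 2) =>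
          ENNReal.ofReal |w pr.1 - w pr.2|)
      exact ((hw.continuous.comp continuous_fst).sub
        (hw.continuous.comp continuous_snd)).abs.measurable.ennreal_ofReal
    calc IV ≤ ∫⁻ x in D, ENNReal.ofReal ρI⁻¹
          * ∫⁻ y in D, ENNReal.ofReal |w x - w y| ∂volume ∂volume := by
          rw [hIV]; exact lintegral_mono fun x => hmean x
      _ = ENNReal.ofReal ρI⁻¹
          * ∫⁻ x in D, ∫⁻ y in D, ENNReal.ofReal |w x - w y| ∂volume ∂volume :=
          lintegral_const_mul _ hmx
      _ ≤ ENNReal.ofReal ρI⁻¹ * (ENNReal.ofReal R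
          * ∫⁻ x in D, ∫⁻ y in D, ∫⁻ t in Ioc (0:ℝ) 1, G (x + t • (y - x)) ∂volume ∂volume ∂volume) := by
          apply mul_le_mul_right
          calc ∫⁻ x in D, ∫⁻ y in D, ENNReal.ofReal |w x - w y| ∂volume ∂volume
              ≤ ∫⁻ x in D, ∫⁻ y in D, ENNReal.ofReal R
                  * ∫⁻ t in Ioc (0:ℝ) 1, G (x + t • (y - x)) ∂volume ∂volume ∂volume := by
                apply lintegral_mono_ae
                refine (ae_restrict_iff' hDm).2 (Filter.Eventually.of_forall ?_)
                intro x hx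
                apply lintegral_mono_ae
                refine (ae_restrict_iff' hDm).2 (Filter.Eventually.of_forall ?_)
                intro y hy
                exact hftc x (subset_closure hx) y (subset_closure hy)
            _ = ∫⁻ x in D, ENNReal.ofReal R
                  * ∫⁻ y in D, ∫⁻ t in Ioc (0:ℝ) 1, G (x + t • (y - x)) ∂volume ∂volume ∂volume := by
                apply lintegral_congr
                intro x
                exact lintegral_const_mul _ (hmyt x _)
            _ = ENNReal.ofReal R
                  * ∫⁻ x in D, ∫⁻ y in D, ∫⁻ t in Ioc (0:ℝ) 1, G (x + t • (y - x)) ∂volume ∂volume ∂volume :=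
                lintegral_const_mul _ (hmxy _)
      _ ≤ ENNReal.ofReal ρI⁻¹ * (ENNReal.ofReal R * (8 * VD * IG)) := by
          apply mul_le_mul_right
          exact mul_le_mul_right hTriple _
      _ = Kp * IG := by rw [hKp]; ring
    -- trace part: transfer Hausdorff integral to the parameter interval
  have hμe : (μH[1] : Measure (EuclideanSpace ℝ (Fin 2))).restrict e
      = Measure.map (fun s : ℝ => p + s • u) (volume.restrict (Icc 0 L)) := by
    rw [he]
    exact hausdorff_seg_param hpq
  have hγm : Measurable fun s : ℝ => p + s • u :=
    (continuous_const.add (continuous_id.smul continuous_const)).measurable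
  have hmap : ∫⁻ x in e, V x ∂μH[1] = ∫⁻ s in Icc (0:ℝ) L, V (p + s • u) ∂volume := by
    rw [hμe, lintegral_map hVm hγm]
  have hψcont : ∀ x : EuclideanSpace ℝ (Fin 2), Continuous fun t : ℝ => x + t • (z₀ - x) :=
    fun x => continuous_const.add (continuous_id.smul continuous_const)
  have hptw : ∀ s ∈ Icc (0:ℝ) L,
      V (p + s • u) ≤ 4 * (∫⁻ t in Ioc (1/4:ℝ) (1/2), V (p + (((1 - t) * s) • u + t • dd)) ∂volume)
        + ENNReal.ofReal R
          * ∫⁻ t in Ioc (0:ℝ) (1/2), G (p + (((1 - t) * s) • u + t • dd)) ∂volume := by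
    intro s hs
    set x : EuclideanSpace ℝ (Fin 2) := p + s • u with hxdef
    have hxcl : x ∈ closure D := hpe s hs
    have hzcl : z₀ ∈ closure D := subset_closure hz₀
    set ψ : ℝ → EuclideanSpace ℝ (Fin 2) := fun t => x + t • (z₀ - x) with hψdef
    have hψΦ : ∀ t : ℝ, ψ t = p + (((1 - t) * s) • u + t • dd) := by
      intro t
      simp only [hψdef, hxdef, hdd]
      match_scalars <;> ring
    have hgψ : ∀ σ : ℝ, 0 ≤ g (ψ σ) := fun σ => by simp only [hg]; exact norm_nonneg _
    have hB0 : ∀ t ∈ Ioc (1/4:ℝ) (1/2),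
        |v x| ≤ |v (ψ t)| + R * ∫ σ in (0:ℝ)..(1/2), g (ψ σ) := by
      intro t ht
      have ht0 : (0:ℝ) < t := lt_trans (by norm_num) ht.1
      have h1 := ftc_bound hvC1 x (ψ t)
      have hd1 : ψ t - x = t • (z₀ - x) := by
        simp only [hψdef]
        module
      have h2 : ∫ τ in (0:ℝ)..1, ‖fderiv ℝ v (x + τ • (ψ t - x))‖
          = ∫ τ in (0:ℝ)..1, g (ψ (τ * t)) := by
        apply intervalIntegral.integral_congr
        intro τ _
        show ‖fderiv ℝ v (x + τ • (ψ t - x))‖ = g (ψ (τ * t))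
        rw [hd1, smul_smul, hfderiv_v]
      have h3 : ∫ τ in (0:ℝ)..1, g (ψ (τ * t)) = t⁻¹ * ∫ σ in (0:ℝ)..t, g (ψ σ) := by
        have hcm := intervalIntegral.integral_comp_mul_right (a := (0:ℝ)) (b := 1)
          (f := fun σ => g (ψ σ)) (c := t) ht0.ne'
        simpa using hcm
      have h4 : ∫ σ in (0:ℝ)..t, g (ψ σ) ≤ ∫ σ in (0:ℝ)..(1/2), g (ψ σ) := by
        apply intervalIntegral.integral_mono_interval le_rfl ht0.le ht.2
        · exact Filter.Eventually.of_forall fun σ => hgψ σ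
        · exact (hgc.comp (hψcont x)).intervalIntegrable 0 (1/2)
      have h5 : ‖ψ t - x‖ ≤ t * R := by
        rw [hd1, norm_smul, Real.norm_eq_abs, abs_of_pos ht0]
        exact mul_le_mul_of_nonneg_left (hRd z₀ hzcl x hxcl) ht0.le
      have hint01 : 0 ≤ ∫ σ in (0:ℝ)..t, g (ψ σ) :=
        intervalIntegral.integral_nonneg ht0.le fun σ _ => hgψ σ
      have h6 : |v (ψ t) - v x| ≤ R * ∫ σ in (0:ℝ)..(1/2), g (ψ σ) := by
        have hc1 : |v (ψ t) - v x| ≤ ‖ψ t - x‖ * (t⁻¹ * ∫ σ in (0:ℝ)..t, g (ψ σ)) := by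
          rw [← h3, ← h2]
          exact h1
        have hc2 : ‖ψ t - x‖ * (t⁻¹ * ∫ σ in (0:ℝ)..t, g (ψ σ))
            ≤ (t * R) * (t⁻¹ * ∫ σ in (0:ℝ)..(1/2), g (ψ σ)) := by
          apply mul_le_mul h5
          · exact mul_le_mul_of_nonneg_left h4 (inv_nonneg.2 ht0.le)
          · exact mul_nonneg (inv_nonneg.2 ht0.le) hint01
          · exact mul_nonneg ht0.le hRpos.le
        have hc3 : (t * R) * (t⁻¹ * ∫ σ in (0:ℝ)..(1/2), g (ψ σ))
            = R * ∫ σ in (0:ℝ)..(1/2), g (ψ σ) := by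
          field_simp
        linarith
      have h7 : |v x| ≤ |v (ψ t)| + |v (ψ t) - v x| := by
        have h8 := abs_sub_abs_le_abs_sub (v x) (v (ψ t))
        have h9 : |v x - v (ψ t)| = |v (ψ t) - v x| := abs_sub_comm _ _
        linarith
      linarith
    set B : ℝ := R * ∫ σ in (0:ℝ)..(1/2), g (ψ σ) with hBdef
    have hBnn : 0 ≤ B := mul_nonneg hRpos.le
      (intervalIntegral.integral_nonneg (by norm_num) fun σ _ => hgψ σ)
    have hITg : IntegrableOn (fun σ => g (ψ σ)) (Ioc (0:ℝ) (1/2)) volume :=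
      (hgc.comp (hψcont x)).integrableOn_Ioc
    have hBoc : ENNReal.ofReal B
        = ENNReal.ofReal R * ∫⁻ σ in Ioc (0:ℝ) (1/2), G (ψ σ) ∂volume := by
      rw [hBdef, ENNReal.ofReal_mul hRpos.le,
        intervalIntegral.integral_of_le (by norm_num : (0:ℝ) ≤ 1/2),
        ofReal_integral_eq_lintegral_ofReal hITg (Filter.Eventually.of_forall fun σ => hgψ σ)]
    have h14 : (4:ℝ≥0∞) * ENNReal.ofReal (1/4:ℝ) = 1 := by
      rw [show ((1:ℝ)/4) = ((4:ℝ))⁻¹ by norm_num,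
        ENNReal.ofReal_inv_of_pos (by norm_num : (0:ℝ) < 4), ENNReal.ofReal_ofNat]
      exact ENNReal.mul_inv_cancel (by norm_num) (by norm_num)
    have havg : ENNReal.ofReal (1/4:ℝ) * V x
        ≤ (∫⁻ t in Ioc (1/4:ℝ) (1/2), V (ψ t) ∂volume)
          + ENNReal.ofReal (1/4:ℝ) * ENNReal.ofReal B := by
      have hconst : ENNReal.ofReal (1/4:ℝ) * V x
          = ∫⁻ _t in Ioc (1/4:ℝ) (1/2), V x ∂volume := by
        rw [setLIntegral_const, Real.volume_Ioc,
          show ((1:ℝ)/2 - 1/4) = 1/4 by norm_num, mul_comm]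
      rw [hconst]
      calc ∫⁻ _t in Ioc (1/4:ℝ) (1/2), V x ∂volume
          ≤ ∫⁻ t in Ioc (1/4:ℝ) (1/2), (V (ψ t) + ENNReal.ofReal B) ∂volume := by
            apply lintegral_mono_ae
            refine (ae_restrict_iff' measurableSet_Ioc).2 (Filter.Eventually.of_forall ?_)
            intro t ht
            calc V x ≤ ENNReal.ofReal (|v (ψ t)| + B) :=
                  ENNReal.ofReal_le_ofReal (hB0 t ht)
              _ = V (ψ t) + ENNReal.ofReal B := ENNReal.ofReal_add (abs_nonneg _) hBnn
        _ = (∫⁻ t in Ioc (1/4:ℝ) (1/2), V (ψ t) ∂volume)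
            + ENNReal.ofReal B * volume (Ioc (1/4:ℝ) (1/2)) := by
            rw [lintegral_add_right _ measurable_const, setLIntegral_const]
        _ = (∫⁻ t in Ioc (1/4:ℝ) (1/2), V (ψ t) ∂volume)
            + ENNReal.ofReal (1/4:ℝ) * ENNReal.ofReal B := by
            rw [Real.volume_Ioc, show ((1:ℝ)/2 - 1/4) = 1/4 by norm_num, mul_comm]
    have hfinal : V x ≤ 4 * (∫⁻ t in Ioc (1/4:ℝ) (1/2), V (ψ t) ∂volume) + ENNReal.ofReal B := by
      calc V x = 1 * V x := (one_mul _).symm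
        _ = 4 * (ENNReal.ofReal (1/4:ℝ) * V x) := by rw [← h14]; ring
        _ ≤ 4 * ((∫⁻ t in Ioc (1/4:ℝ) (1/2), V (ψ t) ∂volume)
            + ENNReal.ofReal (1/4:ℝ) * ENNReal.ofReal B) := mul_le_mul_right havg _
        _ = 4 * (∫⁻ t in Ioc (1/4:ℝ) (1/2), V (ψ t) ∂volume)
            + (4 * ENNReal.ofReal (1/4:ℝ)) * ENNReal.ofReal B := by ring
        _ = 4 * (∫⁻ t in Ioc (1/4:ℝ) (1/2), V (ψ t) ∂volume) + ENNReal.ofReal B := by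
            rw [h14, one_mul]
    calc V (p + s • u) = V x := rfl
      _ ≤ 4 * (∫⁻ t in Ioc (1/4:ℝ) (1/2), V (ψ t) ∂volume) + ENNReal.ofReal B := hfinal
      _ = 4 * (∫⁻ t in Ioc (1/4:ℝ) (1/2), V (p + (((1 - t) * s) • u + t • dd)) ∂volume)
          + ENNReal.ofReal R
            * ∫⁻ t in Ioc (0:ℝ) (1/2), G (p + (((1 - t) * s) • u + t • dd)) ∂volume := by
          rw [hBoc]
          congr 1
          · congr 1
            apply lintegral_congr
            intro t
            rw [hψΦ]
          · congr 1
            apply lintegral_congr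
            intro σ
            rw [hψΦ]
  have hmTv : Measurable fun s : ℝ =>
      ∫⁻ t in Ioc (1/4:ℝ) (1/2), V (p + (((1 - t) * s) • u + t • dd)) ∂volume := by
    apply Measurable.lintegral_prod_right'
      (f := fun z : ℝ × ℝ => V (p + (((1 - z.2) * z.1) • u + z.2 • dd)))
    refine (hVcont.comp ?_).measurable
    exact continuous_const.add
      ((((continuous_const.sub continuous_snd).mul continuous_fst).smul continuous_const).add
        (continuous_snd.smul continuous_const))
  have hmTg : Measurable fun s : ℝ =>
      ∫⁻ t in Ioc (0:ℝ) (1/2), G (p + (((1 - t) * s) • u + t • dd)) ∂volume := by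
    apply Measurable.lintegral_prod_right'
      (f := fun z : ℝ × ℝ => G (p + (((1 - z.2) * z.1) • u + z.2 • dd)))
    refine (hGcont.comp ?_).measurable
    exact continuous_const.add
      ((((continuous_const.sub continuous_snd).mul continuous_fst).smul continuous_const).add
        (continuous_snd.smul continuous_const))
  have hconeV := cone_bound D hDc p z₀ hz₀ u L hpe f hfu hfd hδ hu0 (Ioc (1/4:ℝ) (1/2))
      measurableSet_Ioc (fun t ht => ⟨le_trans (by norm_num) ht.1.le, ht.2⟩) V hVm
  have hconeG := cone_bound D hDc p z₀ hz₀ u L hpe f hfu hfd hδ hu0 (Ioc (0:ℝ) (1/2))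
      measurableSet_Ioc (fun t ht => ⟨ht.1.le, ht.2⟩) G hGm
  have hmain : ∫⁻ x in e, V x ∂μH[1] ≤ Cfin * IG := by
    rw [hmap]
    calc ∫⁻ s in Icc (0:ℝ) L, V (p + s • u) ∂volume
        ≤ ∫⁻ s in Icc (0:ℝ) L,
            (4 * (∫⁻ t in Ioc (1/4:ℝ) (1/2), V (p + (((1 - t) * s) • u + t • dd)) ∂volume)
              + ENNReal.ofReal R
                * ∫⁻ t in Ioc (0:ℝ) (1/2), G (p + (((1 - t) * s) • u + t • dd)) ∂volume) ∂volume := by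
          apply lintegral_mono_ae
          exact (ae_restrict_iff' measurableSet_Icc).2 (Filter.Eventually.of_forall hptw)
      _ = 4 * (∫⁻ s in Icc (0:ℝ) L, ∫⁻ t in Ioc (1/4:ℝ) (1/2),
              V (p + (((1 - t) * s) • u + t • dd)) ∂volume ∂volume)
            + ENNReal.ofReal R * ∫⁻ s in Icc (0:ℝ) L, ∫⁻ t in Ioc (0:ℝ) (1/2),
              G (p + (((1 - t) * s) • u + t • dd)) ∂volume ∂volume := by
          rw [lintegral_add_left (hmTv.const_mul 4), lintegral_const_mul _ hmTv,
            lintegral_const_mul _ hmTg]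
      _ ≤ 4 * (c2 * IV) + ENNReal.ofReal R * (c2 * IG) := by
          apply add_le_add
          · exact mul_le_mul_right hconeV _
          · exact mul_le_mul_right hconeG _
      _ ≤ 4 * (c2 * (Kp * IG)) + ENNReal.ofReal R * (c2 * IG) := by
          apply add_le_add _ le_rfl
          exact mul_le_mul_right (mul_le_mul_right hPoinc _) _
      _ = Cfin * IG := by rw [hCfin]; ring
  have hLHSeq : (∫ x in e, |w x - cc| ∂μH[1]) = (∫⁻ x in e, V x ∂μH[1]).toReal := by
    rw [integral_eq_lintegral_of_nonneg_ae (Filter.Eventually.of_forall fun x => abs_nonneg _)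
      hvc.abs.aestronglyMeasurable]
  have hRHSeq : (∫ x in D, ‖fderiv ℝ w x‖) = IG.toReal := by
    rw [integral_eq_lintegral_of_nonneg_ae (Filter.Eventually.of_forall fun x => norm_nonneg _)
      hgc.aestronglyMeasurable]
  calc ∫ x in e, |w x - cc| ∂μH[1] = (∫⁻ x in e, V x ∂μH[1]).toReal := hLHSeq
    _ ≤ (Cfin * IG).toReal :=
        ENNReal.toReal_mono (ENNReal.mul_ne_top hCtop hIGtop) hmain
    _ = Cfin.toReal * IG.toReal := ENNReal.toReal_mul
    _ ≤ (Cfin.toReal + 1) * IG.toReal :=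
        mul_le_mul_of_nonneg_right (by linarith) ENNReal.toReal_nonneg
    _ = (Cfin.toReal + 1) * ∫ x in D, ‖fderiv ℝ w x‖ := by rw [hRHSeq]
end
end
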